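/- arXiv:1202.5025 — 12 statements merged into one kernel-verified Lean document; each statement's English description precedes it below -/
import Mathlib

section
/- For every vertex v of a connected graph G on n vertices, the sum of relevances R(v) = Σ_{e∈E} rel(e,v) is at most (n−1) times the diameter of the bridge tree of G. -/
open SimpleGraph

/-- Separation of an edge: number of ordered vertex pairs disconnected by removing it. -/
noncomputable def sep {V : Type*} (G : SimpleGraph V) (e : Sym2 V) : ℕ :=
  Nat.card {p : V × V // ¬ (G.deleteEdges {e}).Reachable p.1 p.2}

/-- Relevance of an edge for a vertex: number of vertices reachable from `v` only through `e`. -/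
noncomputable def rel {V : Type*} (G : SimpleGraph V) (e : Sym2 V) (v : V) : ℕ :=
  Nat.card {w : V // ¬ (G.deleteEdges {e}).Reachable v w}

/-- Sum of relevances for a vertex. -/
noncomputable def RSum {V : Type*} (G : SimpleGraph V) (v : V) : ℕ :=
  ∑ᶠ e ∈ G.edgeSet, rel G e v

/-- Number of bridges separating `u` from `v`; this is the distance in the bridge tree
between the bridgeless connected components of `u` and `v`. -/
noncomputable def bridgeDist {V : Type*} (G : SimpleGraph V) (u v : V) : ℕ :=
  Nat.card {e : Sym2 V // G.IsBridge e ∧ ¬ (G.deleteEdges {e}).Reachable u v}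

/-- Diameter of the bridge tree of `G`. -/
noncomputable def bridgeTreeDiam {V : Type*} [Fintype V] (G : SimpleGraph V) : ℕ :=
  Finset.univ.sup fun p : V × V => bridgeDist G p.1 p.2

private lemma reach_del {V : Type*} {G : SimpleGraph V} {a b : V}
    (h : (G.deleteEdges {s(a, b)}).Reachable a b) :
    ∀ {u w : V}, G.Walk u w → (G.deleteEdges {s(a, b)}).Reachable u w := by
  intro u w p
  induction p with
  | nil => exact Reachable.refl _
  | @cons x y z hadj p ih =>
    refine Reachable.trans ?_ ih
    by_cases hc : s(x, y) = s(a, b)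
    · rw [Sym2.eq_iff] at hc
      rcases hc with ⟨rfl, rfl⟩ | ⟨rfl, rfl⟩
      · exact h
      · exact h.symm
    · exact Adj.reachable (by rw [deleteEdges_adj]; exact ⟨hadj, by simpa using hc⟩)

private lemma bridge_of_sep {V : Type*} {G : SimpleGraph V} (hG : G.Connected) {e : Sym2 V}
    (he : e ∈ G.edgeSet) {u w : V} (h : ¬ (G.deleteEdges {e}).Reachable u w) :
    G.IsBridge e := by
  induction e using Sym2.ind with
  | _ a b =>
    by_contra hb
    rw [isBridge_iff] at hb
    push_neg at hb
    have hre : (G.deleteEdges {s(a, b)}).Reachable a b := hb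
    exact h (reach_del hre (hG.preconnected u w).some)

/-- The sum of relevances of a vertex is at most `(n−1)` times the diameter of the bridge tree. -/
theorem stmt_3 {V : Type*} [Fintype V] (G : SimpleGraph V) (hG : G.Connected) (v : V) :
    RSum G v ≤ (Fintype.card V - 1) * bridgeTreeDiam G := by
  classical
  set D := bridgeTreeDiam G with hD
  haveI : Fintype ↥G.edgeSet := Fintype.ofFinite _
  have h1 : RSum G v = ∑ e ∈ G.edgeSet.toFinset, rel G e v := by
    rw [RSum, ← finsum_mem_coe_finset, Set.coe_toFinset]
  have h2 : ∀ e : Sym2 V, rel G e v =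
      ∑ w : V, if ¬ (G.deleteEdges {e}).Reachable v w then 1 else 0 := by
    intro e
    rw [rel, Nat.card_eq_fintype_card, Fintype.card_subtype, Finset.card_filter]
  calc RSum G v = ∑ e ∈ G.edgeSet.toFinset, ∑ w : V,
        if ¬ (G.deleteEdges {e}).Reachable v w then 1 else 0 := by
        rw [h1]; exact Finset.sum_congr rfl fun e _ => h2 e
    _ = ∑ w : V, ∑ e ∈ G.edgeSet.toFinset,
        if ¬ (G.deleteEdges {e}).Reachable v w then 1 else 0 := Finset.sum_comm
    _ ≤ ∑ w : V, bridgeDist G v w := by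
        refine Finset.sum_le_sum fun w _ => ?_
        rw [← Finset.card_filter, bridgeDist, Nat.card_eq_fintype_card, Fintype.card_subtype]
        refine Finset.card_le_card fun e hee => ?_
        simp only [Finset.mem_filter, Set.mem_toFinset, Finset.mem_univ, true_and] at hee ⊢
        exact ⟨bridge_of_sep hG hee.1 hee.2, hee.2⟩
    _ ≤ (Fintype.card V - 1) * D := by
        have hvv : bridgeDist G v v = 0 := by
          rw [bridgeDist]
          have : IsEmpty {e : Sym2 V // G.IsBridge e ∧ ¬ (G.deleteEdges {e}).Reachable v v} :=
            ⟨fun ⟨e, _, h⟩ => h (Reachable.refl v)⟩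
          exact Nat.card_of_isEmpty
        rw [← Finset.add_sum_erase Finset.univ _ (Finset.mem_univ v), hvv, zero_add]
        have := Finset.sum_le_card_nsmul (Finset.univ.erase v) (fun w => bridgeDist G v w) D
          (fun w _ => Finset.le_sup (f := fun p : V × V => bridgeDist G p.1 p.2)
            (Finset.mem_univ (v, w)))
        simpa [Finset.card_erase_of_mem, smul_eq_mul] using this
end

section
/- For a connected graph on n vertices, the sum over all vertices v of Σ_{e∈E} rel(e,v) divided by the number of edges m is at most n times the diameter of the bridge tree; i.e., (1/m)·Σ_{v∈V} R(v) ≤ n·diam(bridge tree). -/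
open SimpleGraph

namespace Stmt5Aux

open Finset

variable {V : Type*} {G : SimpleGraph V}

lemma exists_adj_dist_lt (hG : G.Connected) {v u0 : V} (h : v ≠ u0) :
    ∃ w, G.Adj v w ∧ G.dist w u0 < G.dist v u0 := by
  have hr : G.Reachable v u0 := hG.preconnected v u0
  have hd : G.dist v u0 ≠ 0 := by
    rw [SimpleGraph.dist_ne_zero_iff_ne_and_reachable]; exact ⟨h, hr⟩
  obtain ⟨p, hp⟩ := hr.exists_walk_length_eq_dist
  cases p with
  | nil => simp at hd
  | cons hadj q =>
      refine ⟨_, hadj, ?_⟩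
      have h1 := SimpleGraph.dist_le q
      rw [SimpleGraph.Walk.length_cons] at hp
      omega

lemma card_le_card_edgeSet_add_one [Fintype V] (hG : G.Connected) :
    Fintype.card V ≤ Nat.card G.edgeSet + 1 := by
  classical
  obtain ⟨u0⟩ := hG.nonempty
  have H : ∀ v : {v : V // v ≠ u0}, ∃ w, G.Adj v.1 w ∧ G.dist w u0 < G.dist v.1 u0 :=
    fun v => exists_adj_dist_lt hG v.2
  choose w hadj hlt using H
  have hinj : Function.Injective fun v : {v : V // v ≠ u0} =>
      (⟨s(v.1, w v), hadj v⟩ : G.edgeSet) := by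
    intro a b hab
    have hab' : s(a.1, w a) = s(b.1, w b) := congrArg Subtype.val hab
    rw [Sym2.eq_iff] at hab'
    rcases hab' with ⟨h1, _⟩ | ⟨h1, h2⟩
    · exact Subtype.ext h1
    · exfalso
      have ha := hlt a
      have hb := hlt b
      rw [h1, h2] at ha
      omega
  have hle : Nat.card {v : V // v ≠ u0} ≤ Nat.card G.edgeSet :=
    Nat.card_le_card_of_injective _ hinj
  have hcc : Nat.card {v : V // v ≠ u0} = Fintype.card V - 1 := by
    rw [Nat.card_eq_fintype_card, Fintype.card_subtype_compl, Fintype.card_subtype_eq]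
  have hpos : 0 < Fintype.card V := Fintype.card_pos_iff.mpr ⟨u0⟩
  omega

lemma reachable_deleteEdges_of_not_isBridge (hG : G.Connected) {e : Sym2 V}
    (he : e ∈ G.edgeSet) (hb : ¬ G.IsBridge e) (v w : V) :
    (G.deleteEdges {e}).Reachable v w := by
  induction e using Sym2.inductionOn with
  | hf a b =>
    have hadj : G.Adj a b := he
    have hab : (G.deleteEdges {s(a, b)}).Reachable a b := by
      by_contra h
      exact hb h
    have key : ∀ {x y : V} (_ : G.Walk x y), (G.deleteEdges {s(a, b)}).Reachable x y := by
      intro x y p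
      induction p with
      | nil => exact Reachable.refl _
      | @cons x x' y h q ih =>
        refine Reachable.trans ?_ ih
        by_cases hxe : s(x, x') = s(a, b)
        · rw [Sym2.eq_iff] at hxe
          rcases hxe with ⟨h1, h2⟩ | ⟨h1, h2⟩
          · subst h1; subst h2; exact hab
          · subst h1; subst h2; exact hab.symm
        · refine Adj.reachable ?_
          rw [SimpleGraph.deleteEdges_adj]
          exact ⟨h, by simpa using hxe⟩
    exact key (hG.preconnected v w).some

lemma RSum_eq_sum [Fintype V] (hG : G.Connected) (v : V) :
    RSum G v = ∑ w : V, bridgeDist G v w := by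
  classical
  haveI : Fintype G.edgeSet := Fintype.ofFinite _
  haveI : Fintype (Sym2 V) := Fintype.ofFinite _
  have h1 : RSum G v = ∑ e ∈ G.edgeFinset, rel G e v := by
    rw [RSum, ← coe_edgeFinset, finsum_mem_coe_finset]
  have h2 : ∀ e : Sym2 V, rel G e v
      = ∑ w : V, if ¬ (G.deleteEdges {e}).Reachable v w then 1 else 0 := by
    intro e
    rw [rel, Nat.card_eq_fintype_card, Fintype.card_subtype, Finset.card_filter]
  have h3 : ∀ w : V, bridgeDist G v w
      = ∑ e : Sym2 V, if G.IsBridge e ∧ ¬ (G.deleteEdges {e}).Reachable v w then 1 else 0 := by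
    intro w
    rw [bridgeDist, Nat.card_eq_fintype_card, Fintype.card_subtype, Finset.card_filter]
  rw [h1]
  simp_rw [h2, h3]
  rw [Finset.sum_comm]
  refine Finset.sum_congr rfl fun w _ => ?_
  rw [← Finset.sum_subset (Finset.subset_univ G.edgeFinset)
    (fun e _ he => by
      rw [if_neg]
      rintro ⟨hbr, -⟩
      refine he (mem_edgeFinset.mpr ?_)
      by_contra hne
      induction e using Sym2.inductionOn with
      | hf a b =>
        exact hbr (by
          rw [deleteEdges_eq_self.mpr (Set.disjoint_singleton_right.mpr hne)]
          exact hG.preconnected a b))]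
  refine Finset.sum_congr rfl fun e he => ?_
  rw [mem_edgeFinset] at he
  congr 1
  rw [eq_iff_iff]
  constructor
  · intro hnr
    refine ⟨?_, hnr⟩
    by_contra hbr
    exact hnr (reachable_deleteEdges_of_not_isBridge hG he hbr v w)
  · exact And.right

lemma bridgeDist_self (v : V) : bridgeDist G v v = 0 := by
  have : IsEmpty {e : Sym2 V // G.IsBridge e ∧ ¬ (G.deleteEdges {e}).Reachable v v} :=
    ⟨fun x => x.2.2 (Reachable.refl v)⟩
  exact Nat.card_of_isEmpty

lemma RSum_le [Fintype V] (hG : G.Connected) (v : V) :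
    RSum G v ≤ (Fintype.card V - 1) * bridgeTreeDiam G := by
  classical
  rw [RSum_eq_sum hG v]
  have hz : bridgeDist G v v = 0 := bridgeDist_self v
  rw [← Finset.sum_erase Finset.univ hz]
  have hbd : ∀ w ∈ Finset.univ.erase v, bridgeDist G v w ≤ bridgeTreeDiam G := by
    intro w _
    exact Finset.le_sup (f := fun p : V × V => bridgeDist G p.1 p.2)
      (Finset.mem_univ (v, w))
  calc ∑ w ∈ Finset.univ.erase v, bridgeDist G v w
      ≤ (Finset.univ.erase v).card * bridgeTreeDiam G := by
        simpa [mul_comm] using Finset.sum_le_card_nsmul _ _ _ hbd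
    _ = (Fintype.card V - 1) * bridgeTreeDiam G := by
        rw [Finset.card_erase_of_mem (Finset.mem_univ v), Finset.card_univ]

end Stmt5Aux

/-- `(1/m)·Σ_v R(v) ≤ n·diam(bridge tree)`. -/
theorem stmt_5 {V : Type*} [Fintype V] (G : SimpleGraph V) (hG : G.Connected) :
    (∑ᶠ v : V, (RSum G v : ℝ)) / (Nat.card G.edgeSet : ℝ) ≤
      (Fintype.card V : ℝ) * (bridgeTreeDiam G : ℝ) := by
  classical
  set n := Fintype.card V with hn
  set D := bridgeTreeDiam G with hD
  set m := Nat.card G.edgeSet with hm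
  have hnum : (∑ᶠ v : V, (RSum G v : ℝ)) = ((∑ v : V, RSum G v : ℕ) : ℝ) := by
    rw [finsum_eq_sum_of_fintype]
    push_cast
    rfl
  have hA : ∑ v : V, RSum G v ≤ n * ((n - 1) * D) := by
    calc ∑ v : V, RSum G v ≤ ∑ _v : V, (n - 1) * D :=
          Finset.sum_le_sum fun v _ => Stmt5Aux.RSum_le hG v
      _ = n * ((n - 1) * D) := by rw [Finset.sum_const, Finset.card_univ, smul_eq_mul]
  have hnm : n ≤ m + 1 := Stmt5Aux.card_le_card_edgeSet_add_one hG
  rw [hnum]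
  rcases Nat.eq_zero_or_pos m with h0 | hpos
  · have hn1 : n - 1 = 0 := by omega
    have hA0 : ∑ v : V, RSum G v = 0 := by
      rw [hn1] at hA
      omega
    rw [hA0]
    simp only [Nat.cast_zero, zero_div]
    positivity
  · rw [div_le_iff₀ (by exact_mod_cast hpos)]
    have hfin : ∑ v : V, RSum G v ≤ n * D * m := by
      calc ∑ v : V, RSum G v ≤ n * ((n - 1) * D) := hA
        _ ≤ n * (m * D) := by
            refine Nat.mul_le_mul_left _ (Nat.mul_le_mul_right _ ?_)
            omega
        _ = n * D * m := by ring
    exact_mod_cast hfin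
end

section
/- The bridge tree of a connected graph is a tree, and the map sending each bridge {v,w} of G to the edge {φ(v),φ(w)} of the bridge tree (where φ maps a vertex to its bridgeless connected component) is a bijection from the bridges of G to the edges of the bridge tree. -/
open SimpleGraph

/-- Two vertices are equivalent iff they lie in the same bridgeless connected component,
i.e. they are connected after deleting all bridges. -/
def bccSetoid {V : Type*} (G : SimpleGraph V) : Setoid V where
  r u v := (G.deleteEdges {e | e ∈ G.edgeSet ∧ G.IsBridge e}).Reachable u v
  iseqv := ⟨fun _ => SimpleGraph.Reachable.refl _,
    SimpleGraph.Reachable.symm, SimpleGraph.Reachable.trans⟩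

/-- The bridge tree of `G`: vertices are the bridgeless connected components, two of which
are adjacent iff some edge of `G` joins them. -/
def bridgeTree {V : Type*} (G : SimpleGraph V) : SimpleGraph (Quotient (bccSetoid G)) where
  Adj A B := A ≠ B ∧ ∃ u v : V,
    Quotient.mk (bccSetoid G) u = A ∧ Quotient.mk (bccSetoid G) v = B ∧ G.Adj u v
  symm := by
    constructor
    rintro A B ⟨hne, u, v, hu, hv, h⟩
    exact ⟨hne.symm, v, u, hv, hu, h.symm⟩
  loopless := by
    constructor
    rintro A ⟨hne, -⟩
    exact hne rfl

section Aux

variable {V : Type*} {G : SimpleGraph V}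

lemma bcc_eq_of_adj_not_bridge {u v : V} (h : G.Adj u v) (hb : ¬ G.IsBridge s(u, v)) :
    Quotient.mk (bccSetoid G) u = Quotient.mk (bccSetoid G) v :=
  Quotient.sound ((SimpleGraph.deleteEdges_adj.mpr ⟨h, fun hm => hb hm.2⟩).reachable)

lemma reach_of_bcc_eq {u v : V} {e : Sym2 V} (he : G.IsBridge e)
    (h : Quotient.mk (bccSetoid G) u = Quotient.mk (bccSetoid G) v) :
    (G.deleteEdges {e}).Reachable u v :=
  (Quotient.exact h).mono (by
    intro x y hxy
    rw [SimpleGraph.deleteEdges_adj] at hxy ⊢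
    refine ⟨hxy.1, fun hm => hxy.2 ?_⟩
    rw [Set.mem_singleton_iff] at hm
    subst hm
    exact ⟨hxy.1, he⟩)

lemma bcc_ne_of_bridge {u v : V} (h : G.IsBridge s(u, v)) :
    Quotient.mk (bccSetoid G) u ≠ Quotient.mk (bccSetoid G) v :=
  fun he => (SimpleGraph.isBridge_iff.mp h) (reach_of_bcc_eq h he)

lemma bridge_of_adj_ne {u v : V} (h : G.Adj u v)
    (hne : Quotient.mk (bccSetoid G) u ≠ Quotient.mk (bccSetoid G) v) :
    G.IsBridge s(u, v) := by
  by_contra hb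
  exact hne (bcc_eq_of_adj_not_bridge h hb)

lemma reach_of_treeWalk {u v : V} (hb : G.IsBridge s(u, v)) :
    ∀ {A B : Quotient (bccSetoid G)},
      ((bridgeTree G).deleteEdges
        {s(Quotient.mk (bccSetoid G) u, Quotient.mk (bccSetoid G) v)}).Walk A B →
      ∀ a b : V, Quotient.mk (bccSetoid G) a = A → Quotient.mk (bccSetoid G) b = B →
      (G.deleteEdges {s(u, v)}).Reachable a b := by
  intro A B w
  induction w with
  | nil =>
    intro a b ha hbq
    exact reach_of_bcc_eq hb (ha.trans hbq.symm)
  | @cons A C B h p ih =>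
    intro a b ha hbq
    obtain ⟨hadj, hmem⟩ := SimpleGraph.deleteEdges_adj.mp h
    obtain ⟨hAC, x, y, hx, hy, hxy⟩ := hadj
    have hbxy : G.IsBridge s(x, y) := by
      refine bridge_of_adj_ne hxy ?_
      rw [hx, hy]; exact hAC
    have hne : s(x, y) ≠ s(u, v) := by
      intro heq
      apply hmem
      have h1 : s(A, C) = Sym2.map (Quotient.mk (bccSetoid G)) s(x, y) := by
        rw [Sym2.map_pair_eq, hx, hy]
      rw [h1, heq, Sym2.map_pair_eq]
      rfl
    have hxy' : (G.deleteEdges {s(u, v)}).Adj x y :=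
      SimpleGraph.deleteEdges_adj.mpr ⟨hxy, by simpa using hne⟩
    exact (reach_of_bcc_eq hb (ha.trans hx.symm)).trans
      (hxy'.reachable.trans (ih y b hy hbq))

lemma bridgeTree_reachable_of_walk {a b : V} (w : G.Walk a b) :
    (bridgeTree G).Reachable (Quotient.mk (bccSetoid G) a) (Quotient.mk (bccSetoid G) b) := by
  induction w with
  | nil => exact SimpleGraph.Reachable.refl _
  | @cons a c b h p ih =>
    by_cases hc : Quotient.mk (bccSetoid G) a = Quotient.mk (bccSetoid G) c
    · rw [hc]; exact ih
    · have hadj : (bridgeTree G).Adj (Quotient.mk (bccSetoid G) a)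
          (Quotient.mk (bccSetoid G) c) := ⟨hc, a, c, rfl, rfl, h⟩
      exact hadj.reachable.trans ih

end Aux

/-- The bridge tree of a connected graph is a tree, and `e ↦ {φ(v), φ(w)}` is a bijection
from the bridges of `G` to the edges of the bridge tree. -/
theorem stmt_6 {V : Type*} [Fintype V] (G : SimpleGraph V) (hG : G.Connected) :
    (bridgeTree G).IsTree ∧
    Set.BijOn (Sym2.map (Quotient.mk (bccSetoid G))) {e : Sym2 V | e ∈ G.edgeSet ∧ G.IsBridge e}
      (bridgeTree G).edgeSet := by
  have hconn : (bridgeTree G).Connected := by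
    haveI : Nonempty (Quotient (bccSetoid G)) :=
      Nonempty.map (Quotient.mk (bccSetoid G)) hG.nonempty
    refine SimpleGraph.Connected.mk ?_
    intro A B
    induction A using Quotient.ind with | _ a =>
    induction B using Quotient.ind with | _ b =>
    obtain ⟨w⟩ := hG.preconnected a b
    exact bridgeTree_reachable_of_walk w
  refine ⟨⟨hconn, ?_⟩, ?_, ?_, ?_⟩
  · -- acyclic
    rw [SimpleGraph.isAcyclic_iff_forall_edge_isBridge]
    intro e he
    induction e using Sym2.ind with | _ A B =>
    rw [SimpleGraph.mem_edgeSet] at he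
    obtain ⟨hne, u, v, hu, hv, huv⟩ := he
    subst hu; subst hv
    have hb : G.IsBridge s(u, v) := bridge_of_adj_ne huv hne
    apply SimpleGraph.isBridge_iff.mpr
    refine fun hr => ?_
    obtain ⟨w⟩ := hr
    exact (SimpleGraph.isBridge_iff.mp hb) (reach_of_treeWalk hb w u v rfl rfl)
  · -- maps to
    intro e hb
    revert hb
    refine Sym2.ind (fun u v hb => ?_) e
    rw [Sym2.map_pair_eq, SimpleGraph.mem_edgeSet]
    exact show _ ≠ _ ∧ _ from
      ⟨bcc_ne_of_bridge hb.2, u, v, rfl, rfl, hb.1⟩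
  · -- inj on
    intro e1 hb1 e2 hb2 heq
    revert hb1 hb2 heq
    refine Sym2.ind (fun u v => ?_) e1
    refine Sym2.ind (fun x y hb1 hb2 heq => ?_) e2
    rw [Sym2.map_pair_eq, Sym2.map_pair_eq, Sym2.eq_iff] at heq
    by_contra hne
    apply (SimpleGraph.isBridge_iff.mp hb1.2)
    have hxyne : s(x, y) ≠ s(u, v) := fun h => hne h.symm
    have hadj : (G.deleteEdges {s(u, v)}).Adj x y :=
      SimpleGraph.deleteEdges_adj.mpr ⟨hb2.1, by simpa using hxyne⟩
    rcases heq with ⟨h1, h2⟩ | ⟨h1, h2⟩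
    · exact (reach_of_bcc_eq hb1.2 h1).trans (hadj.reachable.trans (reach_of_bcc_eq hb1.2 h2.symm))
    · exact (reach_of_bcc_eq hb1.2 h1).trans
        (hadj.symm.reachable.trans (reach_of_bcc_eq hb1.2 h2.symm))
  · -- surj on
    intro e he
    revert he
    refine Sym2.ind (fun A B he => ?_) e
    rw [SimpleGraph.mem_edgeSet] at he
    obtain ⟨hne, u, v, hu, hv, huv⟩ := he
    have hb : G.IsBridge s(u, v) := bridge_of_adj_ne huv (by rw [hu, hv]; exact hne)
    exact ⟨s(u, v), ⟨huv, hb⟩, by rw [Sym2.map_pair_eq, hu, hv]⟩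
end

section
/- Let G be a connected graph, e ∈ E a non-bridge, and C any cycle containing e. Then every edge that is a bridge of G−e but not a bridge of G lies on C. -/
open SimpleGraph

private lemma walk_reach_aux {V : Type*} {G H : SimpleGraph V}
    (h : ∀ a b : V, G.Adj a b → H.Reachable a b) :
    ∀ {u v : V}, G.Walk u v → H.Reachable u v := by
  intro u v p
  induction p with
  | nil => exact Reachable.refl _
  | cons h' _ ih => exact (h _ _ h').trans ih

/-- If `e` is a non-bridge of a connected graph `G` and `C` is any cycle containing `e`,
then every edge that is a bridge of `G − e` but not of `G` lies on `C`. -/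
theorem stmt_8 {V : Type*} (G : SimpleGraph V) (hG : G.Connected) (e : Sym2 V)
    (he : e ∈ G.edgeSet) (hnb : ¬ G.IsBridge e) (a : V) (C : G.Walk a a)
    (hC : C.IsCycle) (heC : e ∈ C.edges) :
    ∀ f : Sym2 V, (G.deleteEdges {e}).IsBridge f → ¬ G.IsBridge f → f ∈ C.edges := by
  intro f
  induction f using Sym2.ind with
  | _ x y =>
  intro hfH hnf
  by_contra hfC
  -- f is an edge of G \ e, hence of G, and f ≠ e
  rw [SimpleGraph.deleteEdges] at hfH
  have hfGe : s(x, y) ∈ (G \ fromEdgeSet {e}).edgeSet := by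
    by_contra hne
    apply hfH
    have hdisj : (G \ fromEdgeSet {e}).deleteEdges {s(x, y)} = G \ fromEdgeSet {e} := by
      rw [deleteEdges_eq_self, Set.disjoint_singleton_right]
      exact hne
    rw [hdisj]
    refine walk_reach_aux ?_ (hG.preconnected x y).some
    intro p q hpq
    by_cases hpe : s(p, q) = e
    · subst hpe
      rw [isBridge_iff, not_not] at hnb
      exact hnb
    · refine Adj.reachable ?_
      rw [sdiff_adj]
      refine ⟨hpq, ?_⟩
      simp only [fromEdgeSet_adj, Set.mem_singleton_iff]
      rintro ⟨h1, -⟩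
      exact hpe h1
  have hfG : G.Adj x y := by
    have := hfGe
    rw [edgeSet_sdiff] at this
    exact this.1
  have hfe : s(x, y) ≠ e := by
    rintro rfl
    rw [edgeSet_sdiff, edgeSet_fromEdgeSet] at hfGe
    exact hfGe.2 ⟨rfl, by simp [hfG.ne]⟩
  -- since f is not a bridge of G, endpoints are reachable in G \ f
  have hreach : (G \ fromEdgeSet {s(x, y)}).Reachable x y := by
    rw [isBridge_iff] at hnf
    push_neg at hnf
    exact hnf
  -- transfer C to G \ f
  have hsub : ∀ a' ∈ C.edges, a' ∈ (G \ fromEdgeSet {s(x, y)}).edgeSet := by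
    intro a' ha'
    rw [edgeSet_sdiff, edgeSet_fromEdgeSet]
    refine ⟨C.edges_subset_edgeSet ha', ?_⟩
    rintro ⟨h1, -⟩
    rw [Set.mem_singleton_iff] at h1
    exact hfC (h1 ▸ ha')
  have hC' : ((C.transfer _ hsub)).IsCycle := hC.transfer hsub
  have heC' : e ∈ (C.transfer _ hsub).edges := by
    rwa [Walk.edges_transfer]
  -- e = s(u,v); use the cycle to get reachability in (G \ f) \ e between u and v
  induction e using Sym2.ind with
  | _ u v =>
  have hUV : ((G \ fromEdgeSet {s(x, y)}) \ fromEdgeSet {s(u, v)}).Reachable u v :=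
    ((adj_and_reachable_delete_edges_iff_exists_cycle).mpr ⟨a, _, hC', heC'⟩).2
  -- every edge of G \ f yields reachability in (G \ f) \ e
  obtain ⟨W⟩ := hreach
  have hK : ((G \ fromEdgeSet {s(x, y)}) \ fromEdgeSet {s(u, v)}).Reachable x y := by
    refine walk_reach_aux ?_ W
    intro p q hpq
    by_cases hpe : s(p, q) = s(u, v)
    · rw [Sym2.eq_iff] at hpe
      rcases hpe with ⟨rfl, rfl⟩ | ⟨rfl, rfl⟩
      · exact hUV
      · exact hUV.symm
    · refine Adj.reachable ?_
      rw [sdiff_adj]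
      refine ⟨hpq, ?_⟩
      simp only [fromEdgeSet_adj, Set.mem_singleton_iff]
      rintro ⟨h1, -⟩
      exact hpe h1
  -- contradiction with f being a bridge of G \ e
  rw [isBridge_iff] at hfH
  rw [sdiff_sdiff_comm] at hK
  exact hfH hK
end

section
/- Every 2-edge-connected graph can be constructed from a cycle by successively adding paths or cycles of the form (u, e₁, v₁, …, v_k, e_{k+1}, w), where u and w are (possibly equal) vertices of the already constructed graph and v₁,…,v_k (k ≥ 0) are new vertices. -/
open SimpleGraph

/-- A subgraph of `G` is ear-constructible if it is obtained from a cycle by successively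
adding ears: walks `(u, e₁, v₁, …, v_k, e_{k+1}, w)` (paths, or cycles when `u = w`) whose
endpoints `u, w` already belong to the graph constructed so far and whose internal vertices
`v₁, …, v_k` (`k ≥ 0`) are new. -/
inductive EarConstructible {V : Type*} (G : SimpleGraph V) : G.Subgraph → Prop
  | base {v : V} (c : G.Walk v v) (hc : c.IsCycle) : EarConstructible G c.toSubgraph
  | ear {H : G.Subgraph} {u w : V} (hH : EarConstructible G H)
      (hu : u ∈ H.verts) (hw : w ∈ H.verts) (p : G.Walk u w)
      (htrail : p.IsTrail) (hlen : 1 ≤ p.length)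
      (hcyc : u = w → p.support.tail.Nodup)
      (hpath : u ≠ w → p.IsPath)
      (hnew : ∀ x ∈ p.support, x = u ∨ x = w ∨ x ∉ H.verts) :
      EarConstructible G (H ⊔ p.toSubgraph)


/-- Every walk to a vertex of `S` has a prefix-like subwalk meeting `S` only at its end. -/
lemma exists_prefix_to_set {V : Type*} {G : SimpleGraph V} (S : Set V) :
    ∀ {v u : V} (q : G.Walk v u), q.IsPath → u ∈ S →
    ∃ w, ∃ r : G.Walk v w, w ∈ S ∧ r.IsPath ∧ (∀ e ∈ r.edges, e ∈ q.edges) ∧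
      (∀ x ∈ r.support, x ∈ q.support) ∧ (∀ x ∈ r.support, x = w ∨ x ∉ S) := by
  intro v u q
  induction q with
  | nil =>
    intro _ hu
    exact ⟨_, Walk.nil, hu, Walk.IsPath.nil, by simp, by simp, fun x hx => by
      simp at hx; exact Or.inl hx⟩
  | @cons a b c h q ih =>
    intro hq hu
    by_cases ha : a ∈ S
    · exact ⟨a, Walk.nil, ha, Walk.IsPath.nil, by simp, by simp, fun x hx => by
        simp at hx; exact Or.inl hx⟩
    · obtain ⟨w, r, hwS, hr, hre, hrs, hrS⟩ := ih hq.of_cons hu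
      refine ⟨w, Walk.cons h r, hwS, ?_, ?_, ?_, ?_⟩
      · rw [Walk.cons_isPath_iff]
        refine ⟨hr, fun hmem => ?_⟩
        exact ((Walk.cons_isPath_iff h q).mp hq).2 (hrs a hmem)
      · intro e he
        rw [Walk.edges_cons] at he ⊢
        rcases List.mem_cons.mp he with h' | h'
        · exact List.mem_cons.mpr (Or.inl h')
        · exact List.mem_cons.mpr (Or.inr (hre e h'))
      · intro x hx
        rw [Walk.support_cons] at hx ⊢
        rcases List.mem_cons.mp hx with h' | h'
        · exact List.mem_cons.mpr (Or.inl h')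
        · exact List.mem_cons.mpr (Or.inr (hrs x h'))
      · intro x hx
        rw [Walk.support_cons] at hx
        rcases List.mem_cons.mp hx with rfl | h'
        · exact Or.inr ha
        · exact hrS x h'

lemma ec_verts_nonempty {V : Type*} {G : SimpleGraph V} {H : G.Subgraph}
    (h : EarConstructible G H) : H.verts.Nonempty := by
  induction h with
  | @base v c hc => exact ⟨v, c.start_mem_verts_toSubgraph⟩
  | @ear H u w hH hu hw p _ _ _ _ _ ih => exact ⟨u, Or.inl hu⟩

/-- Extension step: a proper ear-constructible subgraph can be strictly enlarged. -/
lemma ec_extend {V : Type*} {G : SimpleGraph V} (hG : G.Connected)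
    (hb : ∀ e : Sym2 V, ¬ G.IsBridge e) {H : G.Subgraph}
    (hH : EarConstructible G H) (hne : H ≠ ⊤) :
    ∃ H' : G.Subgraph, EarConstructible G H' ∧ H.edgeSet ⊂ H'.edgeSet := by
  classical
  by_cases hedge : ∃ a b : V, a ∈ H.verts ∧ G.Adj a b ∧ s(a, b) ∉ H.edgeSet
  · obtain ⟨u, v, hu, hadj, henotin⟩ := hedge
    -- get a walk from u to v avoiding the edge s(u,v)
    have hnb := hb s(u, v)
    rw [isBridge_iff] at hnb
    push_neg at hnb
    have hreach := hnb
    obtain ⟨p, hp⟩ := reachable_delete_edges_iff_exists_walk.mp hreach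
    set q := p.reverse.toPath with hqdef
    have hq : (q : G.Walk v u).IsPath := q.2
    have hqe : s(u, v) ∉ (q : G.Walk v u).edges := by
      intro hmem
      have := p.reverse.edges_toPath_subset hmem
      rw [Walk.edges_reverse, List.mem_reverse] at this
      exact hp this
    obtain ⟨w, r, hwS, hr, hre, _, hrS⟩ := exists_prefix_to_set H.verts (q : G.Walk v u) hq hu
    have hrne : s(u, v) ∉ r.edges := fun hmem => hqe (hre _ hmem)
    set p₀ : G.Walk u w := Walk.cons hadj r with hp₀
    refine ⟨H ⊔ p₀.toSubgraph, ?_, ?_⟩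
    · refine EarConstructible.ear hH hu hwS p₀ ?_ ?_ ?_ ?_ ?_
      · rw [hp₀, Walk.isTrail_cons]
        exact ⟨hr.isTrail, hrne⟩
      · simp [hp₀]
      · intro _
        rw [hp₀, Walk.support_cons]
        exact hr.support_nodup
      · intro huw
        rw [hp₀, Walk.cons_isPath_iff]
        refine ⟨hr, fun hmem => ?_⟩
        rcases hrS u hmem with rfl | h'
        · exact huw rfl
        · exact h' hu
      · intro x hx
        rw [hp₀, Walk.support_cons] at hx
        rcases List.mem_cons.mp hx with rfl | h'
        · exact Or.inl rfl
        · rcases hrS x h' with rfl | h''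
          · exact Or.inr (Or.inl rfl)
          · exact Or.inr (Or.inr h'')
    · rw [Subgraph.edgeSet_sup]
      constructor
      · exact Set.subset_union_left
      · intro hsub
        have : s(u, v) ∈ p₀.toSubgraph.edgeSet := by
          rw [Walk.edgeSet_toSubgraph]
          simp [hp₀]
        exact henotin (hsub (Or.inr this))
  · -- no boundary edge: H = ⊤, contradiction
    exfalso
    push_neg at hedge
    have hclosed : ∀ a b : V, a ∈ H.verts → G.Adj a b → b ∈ H.verts := by
      intro a b ha hab
      have := hedge a b ha hab
      exact (Subgraph.mem_edgeSet.mp this).snd_mem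
    have hwalk : ∀ {a x : V}, G.Walk a x → a ∈ H.verts → x ∈ H.verts := by
      intro a x wk
      induction wk with
      | nil => exact id
      | cons h _ ih => exact fun ha => ih (hclosed _ _ ha h)
    have hverts : ∀ x : V, x ∈ H.verts := by
      obtain ⟨a, ha⟩ := ec_verts_nonempty hH
      intro x
      obtain ⟨wk⟩ := hG.preconnected a x
      exact hwalk wk ha
    apply hne
    ext x y
    · simp [hverts x]
    · simp only [Subgraph.top_adj]
      constructor
      · exact fun h => H.adj_sub h
      · intro h
        exact Subgraph.mem_edgeSet.mp (hedge x y (hverts x) h)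

/-- Every 2-edge-connected graph can be constructed from a cycle by successively adding
paths or cycles with endpoints in the already constructed graph and new internal vertices. -/
theorem stmt_9 {V : Type*} [Fintype V] (G : SimpleGraph V) (hG : G.Connected)
    (hcard : 2 ≤ Fintype.card V) (hb : ∀ e : Sym2 V, ¬ G.IsBridge e) :
    EarConstructible G ⊤ := by
  classical
  -- G has an edge
  obtain ⟨x, y, hxy⟩ := Fintype.exists_pair_of_one_lt_card (show 1 < Fintype.card V by omega)
  obtain ⟨wk⟩ := hG.preconnected x y
  have hedge : ∃ a b : V, G.Adj a b := by
    cases wk with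
    | nil => exact absurd rfl hxy
    | cons h _ => exact ⟨_, _, h⟩
  obtain ⟨a, b, hab⟩ := hedge
  -- a base cycle
  have hnb := hb s(a, b)
  rw [isBridge_iff] at hnb
  push_neg at hnb
  obtain ⟨u, c, hc, -⟩ :=
    adj_and_reachable_delete_edges_iff_exists_cycle.mp ⟨hab, hnb⟩
  have hbase : EarConstructible G c.toSubgraph := EarConstructible.base c hc
  -- strict decrease of the missing-edge count
  have hdec : ∀ {H H' : G.Subgraph}, H.edgeSet ⊂ H'.edgeSet →
      (G.edgeSet \ H'.edgeSet).ncard < (G.edgeSet \ H.edgeSet).ncard := by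
    intro H H' hsub
    apply Set.ncard_lt_ncard
    · obtain ⟨e, heH', heH⟩ := Set.exists_of_ssubset hsub
      constructor
      · exact fun z hz => ⟨hz.1, fun hz' => hz.2 (hsub.1 hz')⟩
      · intro hsub'
        exact (hsub' ⟨H'.edgeSet_subset heH', heH⟩).2 heH'
    · exact Set.Finite.subset (Set.toFinite G.edgeSet) Set.diff_subset
  -- induction on the number of missing edges
  have key : ∀ n : ℕ, ∀ H : G.Subgraph, EarConstructible G H →
      (G.edgeSet \ H.edgeSet).ncard ≤ n → EarConstructible G ⊤ := by
    intro n
    induction n with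
    | zero =>
      intro H hH hle
      by_cases h : H = ⊤
      · exact h ▸ hH
      · obtain ⟨H', _, hsub⟩ := ec_extend hG hb hH h
        have := hdec hsub
        omega
    | succ n ih =>
      intro H hH hle
      by_cases h : H = ⊤
      · exact h ▸ hH
      · obtain ⟨H', hH', hsub⟩ := ec_extend hG hb hH h
        exact ih H' hH' (by have := hdec hsub; omega)
  exact key _ _ hbase le_rfl
end

section
/- A chord-free graph on n vertices has at most 2n−1 edges. -/
open SimpleGraph

/-- A graph is chord-free if no cycle of it has a chord. -/
def ChordFree {V : Type*} (G : SimpleGraph V) : Prop :=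
  ∀ (a : V) (C : G.Walk a a), C.IsCycle →
    ∀ u v : V, u ∈ C.support → v ∈ C.support → G.Adj u v → s(u, v) ∈ C.edges

private lemma sym2_eq_aux {V : Type*} {a x y : V} (hne : a ≠ y) (h : s(a, x) = s(a, y)) :
    x = y := by
  rw [Sym2.eq_iff] at h
  rcases h with ⟨_, h⟩ | ⟨h1, h2⟩
  · exact h
  · exact absurd h1 hne

/-- In a path starting at `a`, any edge containing `a` must be the first edge. -/
private lemma edge_start {V : Type*} {G : SimpleGraph V} {a b x : V} (p : G.Walk a b)
    (hp : p.IsPath) (he : s(a, x) ∈ p.edges) : x = p.getVert 1 := by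
  cases p with
  | nil => simp at he
  | @cons _ y _ h q =>
    rw [SimpleGraph.Walk.edges_cons, List.mem_cons] at he
    rcases he with he | he
    · have hxy : x = y := sym2_eq_aux h.ne he
      simp [hxy, SimpleGraph.Walk.getVert_cons_succ, SimpleGraph.Walk.getVert_zero]
    · have hmem := SimpleGraph.Walk.fst_mem_support_of_mem_edges q he
      have := (SimpleGraph.Walk.cons_isPath_iff h q).1 hp
      exact absurd hmem this.2

/-- `getVert` is injective on a path. -/
private lemma path_getVert_inj {V : Type*} {G : SimpleGraph V} {a b : V} (p : G.Walk a b)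
    (hp : p.IsPath) : ∀ i j, i ≤ p.length → j ≤ p.length →
      p.getVert i = p.getVert j → i = j := by
  induction p with
  | nil => intro i j hi hj _; simp [SimpleGraph.Walk.length_nil] at hi hj; omega
  | @cons u v w h q ih =>
    intro i j hi hj hij
    have hp' := (SimpleGraph.Walk.cons_isPath_iff h q).1 hp
    match i, j with
    | 0, 0 => rfl
    | 0, k + 1 =>
      exfalso
      apply hp'.2
      rw [SimpleGraph.Walk.mem_support_iff_exists_getVert]
      refine ⟨k, ?_, ?_⟩
      · simpa [SimpleGraph.Walk.getVert_zero, SimpleGraph.Walk.getVert_cons_succ] using hij.symm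
      · simpa [SimpleGraph.Walk.length_cons] using hj
    | k + 1, 0 =>
      exfalso
      apply hp'.2
      rw [SimpleGraph.Walk.mem_support_iff_exists_getVert]
      refine ⟨k, ?_, ?_⟩
      · simpa [SimpleGraph.Walk.getVert_zero, SimpleGraph.Walk.getVert_cons_succ] using hij
      · simpa [SimpleGraph.Walk.length_cons] using hi
    | k + 1, l + 1 =>
      have := ih hp'.1 k l (by simpa [SimpleGraph.Walk.length_cons] using hi)
        (by simpa [SimpleGraph.Walk.length_cons] using hj)
        (by simpa [SimpleGraph.Walk.getVert_cons_succ] using hij)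
      omega

private lemma getVert_length_takeUntil {V : Type*} [DecidableEq V] {G : SimpleGraph V}
    {a b w : V} (p : G.Walk a b) (hw : w ∈ p.support) :
    p.getVert (p.takeUntil w hw).length = w := by
  obtain ⟨k, hk⟩ : ∃ k, (p.takeUntil w hw).length = k := ⟨_, rfl⟩
  rw [hk]
  conv_lhs => rw [← SimpleGraph.Walk.take_spec p hw]
  rw [SimpleGraph.Walk.getVert_append, ← hk]
  simp

private lemma getVert_mem_takeUntil_support {V : Type*} [DecidableEq V] {G : SimpleGraph V}
    {a b w : V} (p : G.Walk a b) (hw : w ∈ p.support) {m : ℕ}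
    (hm : m ≤ (p.takeUntil w hw).length) : p.getVert m ∈ (p.takeUntil w hw).support := by
  rcases lt_or_eq_of_le hm with hm' | hm'
  · have heq : p.getVert m = (p.takeUntil w hw).getVert m := by
      conv_lhs => rw [← SimpleGraph.Walk.take_spec p hw]
      rw [SimpleGraph.Walk.getVert_append, if_pos hm']
    rw [heq, SimpleGraph.Walk.mem_support_iff_exists_getVert]
    exact ⟨m, rfl, le_of_lt hm'⟩
  · rw [hm', getVert_length_takeUntil p hw]
    exact SimpleGraph.Walk.end_mem_support _

/-- Chord-freeness is inherited by induced subgraphs. -/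
private lemma chordFree_induce {V : Type*} {G : SimpleGraph V} (h : ChordFree G) (s : Set V) :
    ChordFree (G.induce s) := by
  intro a C hC u v hu hv huv
  classical
  let f : G.induce s ↪g G := SimpleGraph.Embedding.induce s
  have hinj : Function.Injective f := Subtype.val_injective
  have hC' : (C.map f.toHom).IsCycle :=
    (SimpleGraph.Walk.map_isCycle_iff_of_injective hinj).2 hC
  have hu' : f u ∈ (C.map f.toHom).support := by
    rw [SimpleGraph.Walk.support_map]; exact List.mem_map_of_mem hu
  have hv' : f v ∈ (C.map f.toHom).support := by
    rw [SimpleGraph.Walk.support_map]; exact List.mem_map_of_mem hv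
  have hadj : G.Adj (f u) (f v) := huv
  have hmem := h _ _ hC' _ _ hu' hv' hadj
  rw [SimpleGraph.Walk.edges_map, SimpleGraph.Embedding.coe_toHom, ← Sym2.map_pair_eq,
    List.mem_map_of_injective (Sym2.map.injective hinj)] at hmem
  exact hmem

/-- Counting: removing a vertex removes at most `neighborSet.ncard` edges. -/
private lemma card_edge_del {V : Type*} [Fintype V] (G : SimpleGraph V) (v : V) :
    Nat.card G.edgeSet ≤
      Nat.card (G.induce ({v}ᶜ : Set V)).edgeSet + (G.neighborSet v).ncard := by
  classical
  set A := G.incidenceSet v with hA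
  set B := {e ∈ G.edgeSet | v ∉ e} with hB
  have hsub : G.edgeSet ⊆ A ∪ B := by
    intro e he
    by_cases hv : v ∈ e
    · exact Or.inl ⟨he, hv⟩
    · exact Or.inr ⟨he, hv⟩
  have h1 : Nat.card G.edgeSet = G.edgeSet.ncard := Nat.card_coe_set_eq _
  have h2 : G.edgeSet.ncard ≤ A.ncard + B.ncard :=
    le_trans (Set.ncard_le_ncard hsub (Set.toFinite _)) (Set.ncard_union_le A B)
  have h3 : A.ncard = (G.neighborSet v).ncard := by
    rw [← Nat.card_coe_set_eq, ← Nat.card_coe_set_eq]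
    exact Nat.card_congr (G.incidenceSetEquivNeighborSet v)
  have h4 : B.ncard ≤ Nat.card (G.induce ({v}ᶜ : Set V)).edgeSet := by
    rw [Nat.card_coe_set_eq]
    have hsub2 : B ⊆ Sym2.map (Subtype.val) '' (G.induce ({v}ᶜ : Set V)).edgeSet := by
      rintro e ⟨he, hv⟩
      induction e with
      | _ x y =>
        have hadj : G.Adj x y := he
        rw [Sym2.mem_iff] at hv
        push_neg at hv
        have hx : x ∈ ({v}ᶜ : Set V) := by
          simp only [Set.mem_compl_iff, Set.mem_singleton_iff]
          exact fun hh => hv.1 hh.symm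
        have hy : y ∈ ({v}ᶜ : Set V) := by
          simp only [Set.mem_compl_iff, Set.mem_singleton_iff]
          exact fun hh => hv.2 hh.symm
        refine ⟨s(⟨x, hx⟩, ⟨y, hy⟩), ?_, ?_⟩
        · exact hadj
        · rw [Sym2.map_pair_eq]
    exact le_trans (Set.ncard_le_ncard hsub2 ((Set.toFinite _).image _))
      (Set.ncard_image_le (Set.toFinite _))
  omega

/-- A nonempty chord-free graph has a vertex of degree at most 2. -/
private lemma exists_small_deg {V : Type*} [Fintype V] [Nonempty V] (G : SimpleGraph V)
    (hG : ChordFree G) : ∃ v : V, (G.neighborSet v).ncard ≤ 2 := by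
  classical
  by_contra hcon
  push_neg at hcon
  -- a longest path
  set P : ℕ → Prop := fun n => ∃ (a b : V) (p : G.Walk a b), p.IsPath ∧ p.length = n with hPdef
  have hP0 : P 0 := ⟨Classical.arbitrary V, Classical.arbitrary V, SimpleGraph.Walk.nil,
    SimpleGraph.Walk.IsPath.nil, rfl⟩
  set L := Nat.findGreatest P (Fintype.card V) with hL
  have hPL : P L := Nat.findGreatest_spec (Nat.zero_le _) hP0
  obtain ⟨a, b, p, hp, hlen⟩ := hPL
  have hmax : ∀ (x y : V) (q : G.Walk x y), q.IsPath → q.length ≤ L := fun x y q hq =>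
    Nat.le_findGreatest (le_of_lt hq.length_lt) ⟨x, y, q, hq, rfl⟩
  -- all neighbors of `a` are on the path
  have hnb : ∀ w, G.Adj a w → w ∈ p.support := by
    intro w hw
    by_contra hns
    have hpath : (SimpleGraph.Walk.cons hw.symm p).IsPath :=
      (SimpleGraph.Walk.cons_isPath_iff _ _).2 ⟨hp, hns⟩
    have := hmax _ _ _ hpath
    rw [SimpleGraph.Walk.length_cons, hlen] at this
    omega
  -- position of a neighbor on the path
  set n : ∀ w, w ∈ p.support → ℕ := fun w hw => (p.takeUntil w hw).length with hn
  have hget : ∀ w (hw : w ∈ p.support), p.getVert (n w hw) = w := fun w hw =>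
    getVert_length_takeUntil p hw
  have hle : ∀ w (hw : w ∈ p.support), n w hw ≤ p.length := fun w hw =>
    SimpleGraph.Walk.length_takeUntil_le p hw
  have hpos : ∀ w (hw : w ∈ p.support), G.Adj a w → 1 ≤ n w hw := by
    intro w hw hadj
    by_contra hz
    push_neg at hz
    interval_cases h : n w hw
    · have : a = w := SimpleGraph.Walk.eq_of_length_eq_zero h
      exact hadj.ne this
  -- the key contradiction: two neighbors at positions `2 ≤ nb < nc` give a chorded cycle
  have key : ∀ (bb cc : V) (hbadj : G.Adj a bb) (hcadj : G.Adj a cc)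
      (hbs : bb ∈ p.support) (hcs : cc ∈ p.support),
      2 ≤ n bb hbs → n bb hbs < n cc hcs → False := by
    intro bb cc hbadj hcadj hbs hcs hb2 hbc
    set tu := p.takeUntil cc hcs with htu
    have hplen : 1 ≤ p.length := le_trans (by omega) (hle cc hcs)
    -- s(a, cc) is not an edge of tu.reverse
    have hnotedge : s(a, cc) ∉ tu.reverse.edges := by
      intro hmem
      rw [SimpleGraph.Walk.edges_reverse, List.mem_reverse] at hmem
      have hmem' : s(a, cc) ∈ p.edges := SimpleGraph.Walk.edges_takeUntil_subset p hcs hmem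
      have hcc1 : cc = p.getVert 1 := edge_start p hp hmem'
      have : n cc hcs = 1 := path_getVert_inj p hp _ 1 (hle cc hcs) hplen
        (by rw [hget cc hcs, hcc1])
      omega
    have hcyc : (SimpleGraph.Walk.cons hcadj tu.reverse).IsCycle :=
      (SimpleGraph.Walk.cons_isCycle_iff _ _).2 ⟨(hp.takeUntil hcs).reverse, hnotedge⟩
    set C := SimpleGraph.Walk.cons hcadj tu.reverse with hC
    have haC : a ∈ C.support := SimpleGraph.Walk.start_mem_support _
    have hbC : bb ∈ C.support := by
      have hbtu : bb ∈ tu.support := by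
        have := getVert_mem_takeUntil_support p hcs (m := n bb hbs) (le_of_lt hbc)
        rwa [hget bb hbs] at this
      rw [hC, SimpleGraph.Walk.support_cons, List.mem_cons]
      right
      rw [SimpleGraph.Walk.support_reverse, List.mem_reverse]
      exact hbtu
    have hchord := hG a C hcyc a bb haC hbC hbadj
    rw [hC, SimpleGraph.Walk.edges_cons, List.mem_cons] at hchord
    rcases hchord with hchord | hchord
    · have : bb = cc := sym2_eq_aux hcadj.ne hchord
      subst this
      omega
    · rw [SimpleGraph.Walk.edges_reverse, List.mem_reverse] at hchord
      have hmem' : s(a, bb) ∈ p.edges := SimpleGraph.Walk.edges_takeUntil_subset p hcs hchord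
      have hbb1 : bb = p.getVert 1 := edge_start p hp hmem'
      have : n bb hbs = 1 := path_getVert_inj p hp _ 1 (hle bb hbs) hplen
        (by rw [hget bb hbs, hbb1])
      omega
  -- find three distinct neighbors of `a`
  have h3 : 2 < (G.neighborSet a).ncard := hcon a
  obtain ⟨x, hx, _⟩ := Set.exists_ne_of_one_lt_ncard (s := G.neighborSet a) (by omega) (Classical.arbitrary V)
  have hd1 : (G.neighborSet a \ {x}).ncard = (G.neighborSet a).ncard - 1 :=
    Set.ncard_diff_singleton_of_mem hx
  obtain ⟨y, hy, _⟩ := Set.exists_ne_of_one_lt_ncard (s := G.neighborSet a \ {x})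
    (by omega) (Classical.arbitrary V)
  have hd2 : ((G.neighborSet a \ {x}) \ {y}).ncard = (G.neighborSet a \ {x}).ncard - 1 :=
    Set.ncard_diff_singleton_of_mem hy
  have hz0 : ((G.neighborSet a \ {x}) \ {y}).Nonempty := by
    rw [← Set.ncard_pos (Set.toFinite _)]
    omega
  obtain ⟨z, hz⟩ := hz0
  have hxadj : G.Adj a x := hx
  have hyadj : G.Adj a y := hy.1
  have hzadj : G.Adj a z := hz.1.1
  have hyx : y ≠ x := hy.2
  have hzx : z ≠ x := hz.1.2
  have hzy : z ≠ y := hz.2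
  have hxs := hnb x hxadj
  have hys := hnb y hyadj
  have hzs := hnb z hzadj
  -- positions are distinct and positive
  have hinj : ∀ (u w : V) (hu : u ∈ p.support) (hw : w ∈ p.support),
      n u hu = n w hw → u = w := by
    intro u w hu hw hnw
    rw [← hget u hu, ← hget w hw, hnw]
  have h1x := hpos x hxs hxadj
  have h1y := hpos y hys hyadj
  have h1z := hpos z hzs hzadj
  have hxy' : n x hxs ≠ n y hys := fun h => hyx (hinj y x hys hxs h.symm)
  have hxz' : n x hxs ≠ n z hzs := fun h => hzx (hinj z x hzs hxs h.symm)
  have hyz' : n y hys ≠ n z hzs := fun h => hzy (hinj z y hzs hys h.symm)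
  -- among three distinct positive numbers, the middle one is ≥ 2 and less than the max
  rcases lt_trichotomy (n x hxs) (n y hys) with h1 | h1 | h1
  · rcases lt_trichotomy (n y hys) (n z hzs) with h2 | h2 | h2
    · exact key y z hyadj hzadj hys hzs (by omega) h2
    · exact absurd h2 hyz'
    · rcases lt_trichotomy (n x hxs) (n z hzs) with h4 | h4 | h4
      · exact key z y hzadj hyadj hzs hys (by omega) h2
      · exact absurd h4 hxz'
      · exact key x y hxadj hyadj hxs hys (by omega) h1
  · exact absurd h1 hxy'
  · rcases lt_trichotomy (n x hxs) (n z hzs) with h2 | h2 | h2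
    · exact key x z hxadj hzadj hxs hzs (by omega) h2
    · exact absurd h2 hxz'
    · rcases lt_trichotomy (n y hys) (n z hzs) with h4 | h4 | h4
      · exact key z x hzadj hxadj hzs hxs (by omega) h2
      · exact absurd h4 hyz'
      · exact key y x hyadj hxadj hys hxs (by omega) h1

private lemma main_aux : ∀ (m : ℕ) (V : Type*) [Fintype V], Fintype.card V = m →
    ∀ G : SimpleGraph V, ChordFree G → Nat.card G.edgeSet ≤ 2 * m - 1 := by
  intro m
  induction m using Nat.strong_induction_on with
  | _ m ih =>
    intro V _ hcard G hG
    classical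
    rcases isEmpty_or_nonempty V with hV | hV
    · have : G.edgeSet = ∅ := by
        ext e
        induction e with
        | _ x y => exact iff_of_false (fun h => hV.elim x) (fun h => h.elim)
      simp [this]
    · obtain ⟨v, hv⟩ := exists_small_deg G hG
      have hn : 1 ≤ m := by
        rw [← hcard]
        exact Fintype.card_pos
      have hcompl : ({v}ᶜ : Set V).ncard = m - 1 := by
        have h1 : ({v}ᶜ : Set V).ncard = Nat.card V - ({v} : Set V).ncard := by
          have := Set.ncard_add_ncard_compl ({v} : Set V)
          omega
        rw [h1, Set.ncard_singleton, Nat.card_eq_fintype_card, hcard]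
      have hcard' : Fintype.card ({v}ᶜ : Set V) = m - 1 := by
        rw [← Nat.card_eq_fintype_card, Nat.card_coe_set_eq, hcompl]
      have hrec := ih (m - 1) (by omega) ({v}ᶜ : Set V) hcard'
        (G.induce ({v}ᶜ : Set V)) (chordFree_induce hG _)
      have hcnt := card_edge_del G v
      have hd : (G.neighborSet v).ncard ≤ m - 1 := by
        have hsub : G.neighborSet v ⊆ ({v}ᶜ : Set V) := by
          intro w hw
          simp only [Set.mem_compl_iff, Set.mem_singleton_iff]
          exact fun h => (G.ne_of_adj hw) h.symm
        have := Set.ncard_le_ncard hsub (Set.toFinite _)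
        omega
      omega

/-- A chord-free graph on `n` vertices has at most `2n − 1` edges. -/
theorem stmt_10 {V : Type*} [Fintype V] (G : SimpleGraph V) (h : ChordFree G) :
    Nat.card G.edgeSet ≤ 2 * Fintype.card V - 1 :=
  main_aux (Fintype.card V) V rfl G h
end

section
/- In a connected graph, removing a chord of a cycle does not change the set of bridges: an edge is a bridge in G if and only if it is a bridge in G minus the chord. -/
open SimpleGraph

private lemma reach_transfer {V : Type*} {H K : SimpleGraph V} {v w : V}
    (hvw : K.Reachable v w)
    (h : ∀ x y : V, H.Adj x y → K.Adj x y ∨ s(x, y) = s(v, w)) :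
    ∀ {x y : V}, H.Reachable x y → K.Reachable x y := by
  intro x y ⟨p⟩
  induction p with
  | nil => exact Reachable.refl _
  | cons hadj p ih =>
    refine Reachable.trans ?_ ih
    rcases h _ _ hadj with h' | h'
    · exact ⟨h'.toWalk⟩
    · rw [Sym2.eq_iff] at h'
      rcases h' with ⟨rfl, rfl⟩ | ⟨rfl, rfl⟩
      · exact hvw
      · exact hvw.symm

/-- Removing a chord of a cycle of a connected graph does not change the set of bridges. -/
theorem stmt_11 {V : Type*} (G : SimpleGraph V) (hG : G.Connected) (a : V)
    (C : G.Walk a a) (hC : C.IsCycle) (v w : V) (hv : v ∈ C.support) (hw : w ∈ C.support)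
    (hadj : G.Adj v w) (hchord : s(v, w) ∉ C.edges) :
    ∀ f : Sym2 V, G.IsBridge f ↔ (G.deleteEdges {s(v, w)}).IsBridge f := by
  intro f
  classical
  -- a walk in G from v to w whose edges are edges of C
  set q : G.Walk v w := (C.takeUntil v hv).reverse.append (C.takeUntil w hw) with hqdef
  have hq : ∀ e ∈ q.edges, e ∈ C.edges := by
    intro e he
    rw [hqdef, Walk.edges_append, List.mem_append, Walk.edges_reverse, List.mem_reverse] at he
    rcases he with he | he
    · exact C.edges_takeUntil_subset hv he
    · exact C.edges_takeUntil_subset hw he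
  induction f with
  | _ x y =>
    by_cases hxy : G.Adj x y
    · rw [isBridge_iff]
      -- chord itself is not a bridge in G
      by_cases hf : s(x, y) = s(v, w)
      · have hreach : (G \ fromEdgeSet {s(v, w)}).Reachable v w := by
          refine ⟨q.transfer _ ?_⟩
          intro e he
          have heC := hq e he
          rw [edgeSet_sdiff, Set.mem_diff, edgeSet_fromEdgeSet]
          refine ⟨C.edges_subset_edgeSet heC, ?_⟩
          simp only [Set.mem_diff, Set.mem_singleton_iff, Set.mem_setOf_eq, not_and]
          intro he'
          exact absurd (he' ▸ heC) hchord
        constructor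
        · intro hnr
          exfalso
          rw [Sym2.eq_iff] at hf
          rcases hf with ⟨rfl, rfl⟩ | ⟨rfl, rfl⟩
          · exact hnr hreach
          · rw [Sym2.eq_swap] at hnr
            exact hnr hreach.symm
        · intro hnr
          exfalso
          rw [isBridge_iff] at hnr
          apply hnr
          rw [hf, deleteEdges_deleteEdges, Set.union_self]
          rw [Sym2.eq_iff] at hf
          rcases hf with ⟨rfl, rfl⟩ | ⟨rfl, rfl⟩
          · exact hreach
          · exact hreach.symm
      · -- f ≠ chord
        have hxy' : (G.deleteEdges {s(v, w)}).Adj x y := by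
          rw [deleteEdges_adj]; exact ⟨hxy, by simpa using hf⟩
        rw [show (G.deleteEdges {s(v, w)}).IsBridge s(x, y) ↔ _ from isBridge_iff]
        -- compare reachability in G \ f vs (G \ chord) \ f
        constructor
        · -- bridge in G → bridge in G'
          intro hnr hr
          refine hnr (hr.mono ?_)
          intro p r hpr
          simp only [sdiff_adj, deleteEdges_adj] at hpr ⊢
          exact ⟨hpr.1.1, hpr.2⟩
        · -- bridge in G' → bridge in G
          intro hnr hr
          apply hnr
          have hbridge : (G.deleteEdges {s(v, w)}).IsBridge s(x, y) := isBridge_iff.mpr hnr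
          have hCtr : ∀ e ∈ C.edges, e ∈ (G.deleteEdges {s(v, w)}).edgeSet := by
            intro e he
            rw [edgeSet_deleteEdges, Set.mem_diff]
            refine ⟨C.edges_subset_edgeSet he, ?_⟩
            simp only [Set.mem_singleton_iff]
            rintro rfl
            exact hchord he
          have hC' : (C.transfer (G.deleteEdges {s(v, w)}) hCtr).IsCycle := hC.transfer _
          have hfC : s(x, y) ∉ C.edges := by
            have := (isBridge_iff_forall_cycle_notMem hxy').mp hbridge _ hC'
            rwa [Walk.edges_transfer] at this
          -- v and w are reachable in G' \ f via q
          have hvwreach : ((G.deleteEdges {s(v, w)}) \ fromEdgeSet {s(x, y)}).Reachable v w := by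
            refine ⟨q.transfer _ ?_⟩
            intro e he
            have heC := hq e he
            rw [edgeSet_sdiff, Set.mem_diff]
            refine ⟨hCtr e heC, ?_⟩
            rw [edgeSet_fromEdgeSet]
            simp only [Set.mem_diff, Set.mem_singleton_iff, Set.mem_setOf_eq, not_and]
            rintro rfl
            exact absurd heC hfC
          refine reach_transfer hvwreach ?_ hr
          intro p r hpr
          rw [show (G.deleteEdges {s(x, y)}).Adj p r ↔ (G \ fromEdgeSet {s(x, y)}).Adj p r from Iff.rfl,
            sdiff_adj] at hpr
          rw [sdiff_adj]
          obtain ⟨hpr1, hpr2⟩ := hpr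
          by_cases hc : s(p, r) = s(v, w)
          · exact Or.inr hc
          · exact Or.inl ⟨by rw [deleteEdges_adj]; exact ⟨hpr1, by simpa using hc⟩, hpr2⟩
    · have hne : ∀ p r : V, G.Adj p r → s(p, r) ≠ s(x, y) := by
        intro p r hpr h
        rw [Sym2.eq_iff] at h
        rcases h with ⟨rfl, rfl⟩ | ⟨rfl, rfl⟩
        · exact hxy hpr
        · exact hxy hpr.symm
      have hCtr : ∀ e ∈ C.edges, e ∈ ((G.deleteEdges {s(v, w)}).deleteEdges {s(x, y)}).edgeSet := by
        intro e he
        rw [edgeSet_deleteEdges, Set.mem_diff, edgeSet_deleteEdges, Set.mem_diff]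
        have hmem := C.edges_subset_edgeSet he
        refine ⟨⟨hmem, ?_⟩, ?_⟩
        · simp only [Set.mem_singleton_iff]
          rintro rfl
          exact hchord he
        · simp only [Set.mem_singleton_iff]
          rintro rfl
          exact hxy hmem
      have hvw' : ((G.deleteEdges {s(v, w)}).deleteEdges {s(x, y)}).Reachable v w :=
        ⟨q.transfer _ (fun e he => hCtr e (hq e he))⟩
      have hxyG : G.Reachable x y := hG.preconnected x y
      constructor
      · intro hb
        exfalso
        rw [isBridge_iff] at hb
        apply hb
        refine reach_transfer (v := v) (w := w) (Adj.reachable ?_) ?_ hxyG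
        · rw [deleteEdges_adj]
          exact ⟨hadj, by simpa using hne v w hadj⟩
        · intro p r hpr
          left
          rw [deleteEdges_adj]
          exact ⟨hpr, by simpa using hne p r hpr⟩
      · intro hb
        exfalso
        rw [isBridge_iff] at hb
        apply hb
        refine reach_transfer hvw' ?_ hxyG
        intro p r hpr
        by_cases hc : s(p, r) = s(v, w)
        · exact Or.inr hc
        · left
          rw [deleteEdges_adj, deleteEdges_adj]
          exact ⟨⟨hpr, by simpa using hc⟩, by simpa using hne p r hpr⟩
end

section
/- Let G be connected, v a vertex, e={v,w} an edge, and F a set of edges incident to v with e ∉ F, such that G−F−e is still connected. Then every edge that is a non-bridge in G but a bridge in G−e is also a non-bridge in G−F and a bridge in G−F−e. -/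
open SimpleGraph

private lemma key_one_edge {V : Type*} {H : SimpleGraph V} {a b x y : V}
    (hr : (H ⊔ SimpleGraph.fromEdgeSet {s(a, b)}).Reachable x y) :
    H.Reachable x y ∨ (H.Reachable x a ∧ H.Reachable b y) ∨
      (H.Reachable x b ∧ H.Reachable a y) := by
  obtain ⟨p⟩ := hr
  induction p with
  | nil => exact Or.inl (Reachable.refl _)
  | @cons u c z h p ih =>
    rcases h with h | h
    · rcases ih with h1 | ⟨h1, h2⟩ | ⟨h1, h2⟩
      · exact Or.inl (h.reachable.trans h1)
      · exact Or.inr (Or.inl ⟨h.reachable.trans h1, h2⟩)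
      · exact Or.inr (Or.inr ⟨h.reachable.trans h1, h2⟩)
    · rw [fromEdgeSet_adj, Set.mem_singleton_iff, Sym2.eq_iff] at h
      obtain ⟨⟨rfl, rfl⟩ | ⟨rfl, rfl⟩, hne⟩ := h
      · rcases ih with h1 | ⟨h1, h2⟩ | ⟨h1, h2⟩
        · exact Or.inr (Or.inl ⟨Reachable.refl _, h1⟩)
        · exact Or.inl (h1.symm.trans h2)
        · exact Or.inl h2
      · rcases ih with h1 | ⟨h1, h2⟩ | ⟨h1, h2⟩
        · exact Or.inr (Or.inr ⟨Reachable.refl _, h1⟩)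
        · exact Or.inl h2
        · exact Or.inl (h1.symm.trans h2)

/-- Let `G` be connected, `e = {v,w}` an edge, and `F` a set of edges incident with `v`
not containing `e`, such that `G − F − e` is still connected. Then every edge that is a
non-bridge in `G` but a bridge in `G − e` is a non-bridge in `G − F` and a bridge in
`G − F − e`. -/
theorem stmt_12 {V : Type*} (G : SimpleGraph V) (hG : G.Connected) (v w : V)
    (hadj : G.Adj v w) (F : Set (Sym2 V)) (hFE : F ⊆ G.edgeSet)
    (hFv : ∀ f ∈ F, v ∈ f) (heF : s(v, w) ∉ F)
    (hconn : (G.deleteEdges (F ∪ {s(v, w)})).Connected) :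
    ∀ f : Sym2 V, ¬ G.IsBridge f → (G.deleteEdges {s(v, w)}).IsBridge f →
      ¬ (G.deleteEdges F).IsBridge f ∧ (G.deleteEdges (F ∪ {s(v, w)})).IsBridge f := by
  intro f hGnb hbr
  induction f using Sym2.ind with
  | _ x y =>
  have hEq : ∀ (s t : Set (Sym2 V)), (G.deleteEdges s) \ fromEdgeSet t
      = G.deleteEdges (s ∪ t) := fun s t => deleteEdges_deleteEdges s t
  have hle : ∀ (s : Set (Sym2 V)) (a : Sym2 V),
      G.deleteEdges s ≤ G.deleteEdges (s ∪ {a}) ⊔ fromEdgeSet {a} := by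
    intro s a
    rw [← hEq]
    exact le_sdiff_sup
  rw [isBridge_iff] at hbr
  have hnr := hbr
  rw [deleteEdges_deleteEdges] at hnr
  have hfe : ¬ s(x, y) = s(v, w) := by
    intro h
    exact hnr ((hconn.preconnected x y).mono (deleteEdges_anti (by
      rw [h]; exact Set.union_subset Set.subset_union_right Set.subset_union_right)))
  -- f ∉ F
  have hfF : s(x, y) ∉ F := by
    intro hf
    exact hnr ((hconn.preconnected x y).mono
      (deleteEdges_anti (by
        intro z hz
        rcases hz with hz | hz
        · simp only [Set.mem_singleton_iff] at hz; exact Or.inr (hz ▸ rfl)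
        · simp only [Set.mem_singleton_iff] at hz; exact Or.inl (hz ▸ hf))))
  -- reachability in G − f from non-bridge hypothesis
  have hreachGf : (G.deleteEdges {s(x, y)}).Reachable x y := by
    by_contra hcon
    exact hGnb hcon
  -- everything reaches x or y in H := G − F − e − f
  set H := G.deleteEdges ((F ∪ {s(v, w)}) ∪ {s(x, y)}) with hH
  have hux : ∀ u : V, H.Reachable u x ∨ H.Reachable u y := by
    intro u
    have := key_one_edge (a := x) (b := y)
      ((hconn.preconnected u x).mono (hle (F ∪ {s(v, w)}) s(x, y)))
    rcases this with h | ⟨h, _⟩ | ⟨h, _⟩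
    · exact Or.inl h
    · exact Or.inl h
    · exact Or.inr h
  -- H ≤ G − e − f
  have hHle : H ≤ G.deleteEdges ({s(x, y)} ∪ {s(v, w)}) := by
    apply deleteEdges_anti
    intro z hz
    rcases hz with hz | hz
    · exact Or.inr hz
    · exact Or.inl (Or.inr hz)
  have hnr' : ¬ (G.deleteEdges ({s(x, y)} ∪ {s(v, w)})).Reachable x y := by
    rwa [Set.union_comm]
  -- in the "bad" cases (v and w reach the same endpoint of f), derive contradiction
  have hbad : ∀ z : V, (z = x ∨ z = y) → H.Reachable v z → H.Reachable w z → False := by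
    intro z hz hv hw
    set H' := G.deleteEdges ({s(x, y)} ∪ {s(v, w)}) with hH'
    have hv' : H'.Reachable v z := hv.mono hHle
    have hw' : H'.Reachable w z := hw.mono hHle
    have hrzxy : H'.Reachable z x ∨ H'.Reachable z y := by
      rcases hz with rfl | rfl
      · exact Or.inl (Reachable.refl _)
      · exact Or.inr (Reachable.refl _)
    have := key_one_edge (a := v) (b := w)
      (hreachGf.mono (hle {s(x, y)} s(v, w)))
    rcases this with h | ⟨h1, h2⟩ | ⟨h1, h2⟩
    · exact hnr' h
    · -- x ↝ v and w ↝ y in H'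
      rcases hrzxy with hzx | hzy
      · exact hnr' ((hw'.trans hzx).symm.trans h2)
      · exact hnr' (h1.trans (hv'.trans hzy))
    · -- x ↝ w and v ↝ y in H'
      rcases hrzxy with hzx | hzy
      · exact hnr' ((hv'.trans hzx).symm.trans h2)
      · exact hnr' (h1.trans (hw'.trans hzy))
  constructor
  · -- non-bridge in G − F
    rw [isBridge_iff]
    intro hnot
    rw [deleteEdges_deleteEdges] at hnot
    apply hnot
    -- show (G − F − f).Reachable x y using the edge e = s(v,w)
    have hadjK : (G.deleteEdges (F ∪ {s(x, y)})).Adj v w := by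
      simp only [deleteEdges_adj, Set.mem_union, Set.mem_singleton_iff]
      refine ⟨hadj, ?_⟩
      rintro (h | h)
      · exact heF h
      · exact hfe h.symm
    have hHleK : H ≤ G.deleteEdges (F ∪ {s(x, y)}) := by
      apply deleteEdges_anti
      intro z hz
      rcases hz with hz | hz
      · exact Or.inl (Or.inl hz)
      · exact Or.inr hz
    rcases hux v with hvx | hvy <;> rcases hux w with hwx | hwy
    · exact (hbad x (Or.inl rfl) hvx hwx).elim
    · exact (hvx.mono hHleK).symm.trans (hadjK.reachable.trans (hwy.mono hHleK))
    · exact (hwx.mono hHleK).symm.trans (hadjK.symm.reachable.trans (hvy.mono hHleK))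
    · exact (hbad y (Or.inr rfl) hvy hwy).elim
  · -- bridge in G − F − e
    rw [isBridge_iff]
    · intro hr
      rw [deleteEdges_deleteEdges] at hr
      exact hnr (hr.mono (deleteEdges_anti (by
        intro z hz
        rcases hz with hz | hz
        · exact Or.inl (Or.inr hz)
        · exact Or.inr hz)))
end

section
/- If a connected graph has at least two critical edges (edges attaining the maximum separation sep_max > 0), then for any two critical edges e, e' the path between them in the bridge tree has length 2, i.e., all critical edges share a common endpoint in the bridge tree (they form a star in the bridge tree). -/
open SimpleGraph

/-- Maximum separation over all edges. -/
noncomputable def sepMax {V : Type*} [Fintype V] [DecidableEq V] (G : SimpleGraph V) : ℕ :=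
  Finset.univ.sup fun e : Sym2 V => sep G e

private lemma sym2_cases {α : Type*} (f : Sym2 α) : ∃ x y, f = s(x, y) :=
  Sym2.ind (f := fun z => ∃ x y, z = s(x, y)) (fun x y => ⟨x, y, rfl⟩) f

private lemma tri {V : Type*} (G : SimpleGraph V) (x y : V) {u w : V} (p : G.Walk u w) :
    (G.deleteEdges {s(x, y)}).Reachable u w ∨
    ((G.deleteEdges {s(x, y)}).Reachable u x ∧ (G.deleteEdges {s(x, y)}).Reachable y w) ∨
    ((G.deleteEdges {s(x, y)}).Reachable u y ∧ (G.deleteEdges {s(x, y)}).Reachable x w) := by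
  induction p with
  | nil => exact Or.inl (Reachable.refl _)
  | @cons a b c h p ih =>
    by_cases he : s(a, b) = s(x, y)
    · rw [Sym2.eq_iff] at he
      rcases he with ⟨rfl, rfl⟩ | ⟨rfl, rfl⟩
      · rcases ih with h1 | ⟨h1, h2⟩ | ⟨h1, h2⟩
        · exact Or.inr (Or.inl ⟨Reachable.refl _, h1⟩)
        · exact Or.inr (Or.inl ⟨Reachable.refl _, h2⟩)
        · exact Or.inl h2
      · rcases ih with h1 | ⟨h1, h2⟩ | ⟨h1, h2⟩
        · exact Or.inr (Or.inr ⟨Reachable.refl _, h1⟩)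
        · exact Or.inl h2
        · exact Or.inl (h1.symm.trans h2)
    · have hadj : (G.deleteEdges {s(x, y)}).Adj a b := by
        rw [SimpleGraph.deleteEdges_adj]
        exact ⟨h, by simpa using he⟩
      rcases ih with h1 | ⟨h1, h2⟩ | ⟨h1, h2⟩
      · exact Or.inl (hadj.reachable.trans h1)
      · exact Or.inr (Or.inl ⟨hadj.reachable.trans h1, h2⟩)
      · exact Or.inr (Or.inr ⟨hadj.reachable.trans h1, h2⟩)

private lemma dich {V : Type*} (G : SimpleGraph V) (x y w : V) (h : G.Reachable x w) :
    (G.deleteEdges {s(x, y)}).Reachable x w ∨ (G.deleteEdges {s(x, y)}).Reachable y w := by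
  obtain ⟨p⟩ := h
  rcases tri G x y p with h1 | ⟨h1, h2⟩ | ⟨h1, h2⟩
  · exact Or.inl h1
  · exact Or.inr h2
  · exact Or.inl h2

private lemma transfer {V : Type*} (H : SimpleGraph V) (x y : V) {u w : V}
    (huw : H.Reachable u w) (hx : ¬ H.Reachable u x) (hy : ¬ H.Reachable u y) :
    (H.deleteEdges {s(x, y)}).Reachable u w := by
  obtain ⟨p⟩ := huw
  rcases tri H x y p with h1 | ⟨h1, _⟩ | ⟨h1, _⟩
  · exact h1
  · exact absurd (h1.mono (SimpleGraph.deleteEdges_le _)) hx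
  · exact absurd (h1.mono (SimpleGraph.deleteEdges_le _)) hy

private lemma bridge_not_reach {V : Type*} {G : SimpleGraph V} {x y : V}
    (hb : G.IsBridge s(x, y)) : ¬ (G.deleteEdges {s(x, y)}).Reachable x y :=
  SimpleGraph.isBridge_iff.mp hb

private lemma crit_bridge {V : Type*} (G : SimpleGraph V) (hG : G.Connected) {e : Sym2 V}
    (he : e ∈ G.edgeSet) (hpos : 0 < sep G e) : G.IsBridge e := by
  refine Sym2.ind (f := fun z => z ∈ G.edgeSet → 0 < sep G z → G.IsBridge z)
    (fun x y he hpos => ?_) e he hpos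
  have hnon : Nonempty {p : V × V // ¬ (G.deleteEdges {s(x, y)}).Reachable p.1 p.2} :=
    (Nat.card_pos_iff.mp hpos).1
  obtain ⟨⟨p, hp⟩⟩ := hnon
  refine SimpleGraph.isBridge_iff.mpr (fun hxy => ?_)
  obtain ⟨w⟩ := hG.preconnected p.1 p.2
  rcases tri G x y w with h1 | ⟨h1, h2⟩ | ⟨h1, h2⟩
  · exact hp h1
  · exact hp (h1.trans (hxy.trans h2))
  · exact hp (h1.trans (Reachable.trans hxy.symm h2))

private lemma exists_sep_bridge {V : Type*} [Fintype V] (G : SimpleGraph V) {u v : V}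
    (hR : G.Reachable u v) (h : ¬ (G.deleteEdges {f | G.IsBridge f}).Reachable u v) :
    ∃ f, G.IsBridge f ∧ ¬ (G.deleteEdges {f}).Reachable u v := by
  classical
  by_contra hc
  push_neg at hc
  apply h
  have key : ∀ F : Finset (Sym2 V), (∀ f ∈ F, G.IsBridge f) →
      (G.deleteEdges ↑F).Reachable u v := by
    intro F
    induction F using Finset.induction with
    | empty => intro _; simpa using hR
    | @insert f F' hf ih =>
      intro hsub
      have hrf' := ih fun g hg => hsub g (Finset.mem_insert_of_mem hg)
      have hbf : G.IsBridge f := hsub f (Finset.mem_insert_self _ _)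
      obtain ⟨x, y, rfl⟩ := sym2_cases f
      have hset : (↑(insert s(x, y) F') : Set (Sym2 V)) = ↑F' ∪ {s(x, y)} := by
        ext g; simp [or_comm]
      rw [hset, ← SimpleGraph.deleteEdges_deleteEdges]
      have hmono : (G.deleteEdges ↑F').deleteEdges {s(x, y)} ≤ G.deleteEdges {s(x, y)} := by
        rw [SimpleGraph.deleteEdges_deleteEdges]
        exact SimpleGraph.deleteEdges_anti Set.subset_union_right
      obtain ⟨p⟩ := hrf'
      have hnr := bridge_not_reach hbf
      have huv := hc s(x, y) hbf
      rcases tri (G.deleteEdges ↑F') x y p with h1 | ⟨h1, h2⟩ | ⟨h1, h2⟩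
      · exact h1
      · exact absurd ((h1.mono hmono).symm.trans (huv.trans (h2.mono hmono).symm)) hnr
      · exact absurd ((h2.mono hmono).trans ((huv.symm.trans (h1.mono hmono)))) hnr
  have hEq : (↑(Finset.univ.filter (G.IsBridge ·)) : Set (Sym2 V)) = {f | G.IsBridge f} := by
    ext g; simp
  rw [← hEq]
  exact key _ (by simp)

private lemma ncard_prod' {α : Type*} (s t : Set α) : (s ×ˢ t).ncard = s.ncard * t.ncard := by
  rw [← Nat.card_coe_set_eq, ← Nat.card_coe_set_eq, ← Nat.card_coe_set_eq,
    ← Nat.card_prod]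
  exact Nat.card_congr (Equiv.Set.prod s t)

private lemma sepAux {V : Type*} [Fintype V] (G : SimpleGraph V) (hG : G.Connected)
    {x y u v : V} (hxy : G.Adj x y)
    (hxu : (G.deleteEdges {s(x, y)}).Reachable x u)
    (hnuv : ¬ (G.deleteEdges {s(x, y)}).Reachable u v) :
    sep G s(x, y) = 2 * {w | (G.deleteEdges {s(x, y)}).Reachable u w}.ncard *
      {w | (G.deleteEdges {s(x, y)}).Reachable v w}.ncard ∧
    {w | (G.deleteEdges {s(x, y)}).Reachable u w}.ncard +
      {w | (G.deleteEdges {s(x, y)}).Reachable v w}.ncard = Nat.card V := by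
  have hyv : (G.deleteEdges {s(x, y)}).Reachable y v := by
    rcases dich G x y v (hG.preconnected x v) with h | h
    · exact absurd (hxu.symm.trans h) hnuv
    · exact h
  have hall : ∀ w, (G.deleteEdges {s(x, y)}).Reachable u w ∨
      (G.deleteEdges {s(x, y)}).Reachable v w := fun w => by
    rcases dich G x y w (hG.preconnected x w) with h | h
    · exact Or.inl (hxu.symm.trans h)
    · exact Or.inr (hyv.symm.trans h)
  set S := {w | (G.deleteEdges {s(x, y)}).Reachable u w} with hS
  set T := {w | (G.deleteEdges {s(x, y)}).Reachable v w} with hT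
  have hdisj : Disjoint S T := Set.disjoint_left.mpr fun w hw hw' => hnuv (hw.trans hw'.symm)
  have hset : {pr : V × V | ¬ (G.deleteEdges {s(x, y)}).Reachable pr.1 pr.2} =
      S ×ˢ T ∪ T ×ˢ S := by
    ext ⟨p, q⟩
    simp only [Set.mem_setOf_eq, Set.mem_union, Set.mem_prod, hS, hT]
    constructor
    · intro hpq
      rcases hall p with hp | hp <;> rcases hall q with hq | hq
      · exact absurd (hp.symm.trans hq) hpq
      · exact Or.inl ⟨hp, hq⟩
      · exact Or.inr ⟨hp, hq⟩
      · exact absurd (hp.symm.trans hq) hpq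
    · rintro (⟨hp, hq⟩ | ⟨hp, hq⟩) hpq
      · exact hnuv (hp.trans (hpq.trans hq.symm))
      · exact hnuv (hq.trans (hpq.symm.trans hp.symm))
  have hdisj2 : Disjoint (S ×ˢ T) (T ×ˢ S) := by
    rw [Set.disjoint_left]
    rintro ⟨p, q⟩ ⟨hp1, _⟩ ⟨hp2, _⟩
    exact Set.disjoint_left.mp hdisj hp1 hp2
  have hcard : sep G s(x, y) =
      {pr : V × V | ¬ (G.deleteEdges {s(x, y)}).Reachable pr.1 pr.2}.ncard :=
    Nat.card_coe_set_eq _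
  constructor
  · rw [hcard, hset, Set.ncard_union_eq hdisj2, ncard_prod', ncard_prod']
    ring
  · have huniv : S ∪ T = Set.univ := Set.eq_univ_of_forall fun w => (hall w).elim
      (fun h => Set.mem_union_left _ h) (fun h => Set.mem_union_right _ h)
    rw [← Set.ncard_union_eq hdisj, huniv, Set.ncard_univ]

private lemma sep_eq {V : Type*} [Fintype V] (G : SimpleGraph V) (hG : G.Connected)
    {x y u v : V} (hxy : G.Adj x y)
    (hnxy : ¬ (G.deleteEdges {s(x, y)}).Reachable x y)
    (hnuv : ¬ (G.deleteEdges {s(x, y)}).Reachable u v) :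
    sep G s(x, y) = 2 * {w | (G.deleteEdges {s(x, y)}).Reachable u w}.ncard *
      {w | (G.deleteEdges {s(x, y)}).Reachable v w}.ncard ∧
    {w | (G.deleteEdges {s(x, y)}).Reachable u w}.ncard +
      {w | (G.deleteEdges {s(x, y)}).Reachable v w}.ncard = Nat.card V := by
  rcases dich G x y u (hG.preconnected x u) with h | h
  · exact sepAux G hG hxy h hnuv
  · rw [show s(x, y) = s(y, x) from Sym2.eq_swap] at hnuv h ⊢
    exact sepAux G hG hxy.symm h hnuv

private lemma core {V : Type*} [Fintype V] (G : SimpleGraph V) (hG : G.Connected)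
    (x₁ y₁ x₂ y₂ : V)
    (hb₁ : G.IsBridge s(x₁, y₁)) (hb₂ : G.IsBridge s(x₂, y₂))
    (hne : s(x₁, y₁) ≠ s(x₂, y₂))
    (hsep : sep G s(x₂, y₂) = sep G s(x₁, y₁))
    (hmax : ∀ f, sep G f ≤ sep G s(x₁, y₁))
    (ho₁ : (G.deleteEdges {s(x₁, y₁)}).Reachable y₁ x₂)
    (ho₂ : (G.deleteEdges {s(x₂, y₂)}).Reachable y₂ x₁)
    (hyy : ¬ (G.deleteEdges {f | G.IsBridge f}).Reachable y₁ y₂) : False := by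
  classical
  have hadj₁ : G.Adj x₁ y₁ := hb₁.reachable_iff_adj.mp (hG.preconnected x₁ y₁)
  have hadj₂ : G.Adj x₂ y₂ := hb₂.reachable_iff_adj.mp (hG.preconnected x₂ y₂)
  have hnr₁ : ¬ (G.deleteEdges {s(x₁, y₁)}).Reachable x₁ y₁ := bridge_not_reach hb₁
  have hnr₂ : ¬ (G.deleteEdges {s(x₂, y₂)}).Reachable x₂ y₂ := bridge_not_reach hb₂
  have hsame₁ : (G.deleteEdges {s(x₁, y₁)}).Reachable x₂ y₂ := by
    refine Adj.reachable ?_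
    rw [SimpleGraph.deleteEdges_adj]
    exact ⟨hadj₂, by simpa using Ne.symm hne⟩
  have hsame₂ : (G.deleteEdges {s(x₂, y₂)}).Reachable x₁ y₁ := by
    refine Adj.reachable ?_
    rw [SimpleGraph.deleteEdges_adj]
    exact ⟨hadj₁, by simpa using hne⟩
  have h12 : (G.deleteEdges {s(x₁, y₁)}).Reachable y₁ y₂ := ho₁.trans hsame₁
  have h21 : (G.deleteEdges {s(x₂, y₂)}).Reachable y₂ y₁ := ho₂.trans hsame₂
  obtain ⟨f, hbf, hf⟩ := exists_sep_bridge G (hG.preconnected y₁ y₂) hyy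
  obtain ⟨p, q, rfl⟩ := sym2_cases f
  have hGpq : G.Adj p q := hbf.reachable_iff_adj.mp (hG.preconnected p q)
  have hFpq : ¬ (G.deleteEdges {s(p, q)}).Reachable p q := bridge_not_reach hbf
  have hfe₁ : s(p, q) ≠ s(x₁, y₁) := by
    intro hh; rw [hh] at hf; exact hf h12
  have hfe₂ : s(p, q) ≠ s(x₂, y₂) := by
    intro hh; rw [hh] at hf; exact hf h21.symm
  have hmono₁ : (G.deleteEdges {s(x₁, y₁)}).deleteEdges {s(p, q)} ≤ G.deleteEdges {s(p, q)} := by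
    rw [SimpleGraph.deleteEdges_deleteEdges]
    exact SimpleGraph.deleteEdges_anti Set.subset_union_right
  have hmono₂ : (G.deleteEdges {s(x₂, y₂)}).deleteEdges {s(p, q)} ≤ G.deleteEdges {s(p, q)} := by
    rw [SimpleGraph.deleteEdges_deleteEdges]
    exact SimpleGraph.deleteEdges_anti Set.subset_union_right
  -- the endpoints of f are outside A (the x₁-side of e₁)
  have hpq₁ : (G.deleteEdges {s(x₁, y₁)}).Reachable p q := by
    refine Adj.reachable ?_
    rw [SimpleGraph.deleteEdges_adj]
    exact ⟨hGpq, by simpa using hfe₁⟩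
  have hpq₂ : (G.deleteEdges {s(x₂, y₂)}).Reachable p q := by
    refine Adj.reachable ?_
    rw [SimpleGraph.deleteEdges_adj]
    exact ⟨hGpq, by simpa using hfe₂⟩
  have hAp : ¬ (G.deleteEdges {s(x₁, y₁)}).Reachable x₁ p := by
    intro hxp
    have hxq := hxp.trans hpq₁
    have h1 : ¬ (G.deleteEdges {s(x₁, y₁)}).Reachable y₁ p := fun hh => hnr₁ (hxp.trans hh.symm)
    have h2 : ¬ (G.deleteEdges {s(x₁, y₁)}).Reachable y₁ q := fun hh => hnr₁ (hxq.trans hh.symm)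
    exact hf ((transfer _ p q h12 h1 h2).mono hmono₁)
  have hAq : ¬ (G.deleteEdges {s(x₁, y₁)}).Reachable x₁ q :=
    fun hxq => hAp (hxq.trans hpq₁.symm)
  have hBp : ¬ (G.deleteEdges {s(x₂, y₂)}).Reachable x₂ p := by
    intro hxp
    have hxq := hxp.trans hpq₂
    have h1 : ¬ (G.deleteEdges {s(x₂, y₂)}).Reachable y₂ p := fun hh => hnr₂ (hxp.trans hh.symm)
    have h2 : ¬ (G.deleteEdges {s(x₂, y₂)}).Reachable y₂ q := fun hh => hnr₂ (hxq.trans hh.symm)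
    exact hf (((transfer _ p q h21 h1 h2).mono hmono₂).symm)
  have hBq : ¬ (G.deleteEdges {s(x₂, y₂)}).Reachable x₂ q :=
    fun hxq => hBp (hxq.trans hpq₂.symm)
  -- sep values
  obtain ⟨hA1, hA2⟩ := sep_eq G hG hadj₁ hnr₁ hnr₁
  obtain ⟨hB1, hB2⟩ := sep_eq G hG hadj₂ hnr₂ hnr₂
  obtain ⟨hF1, hF2⟩ := sep_eq G hG hGpq hFpq hf
  -- containments
  have hSsub : insert y₁ {w | (G.deleteEdges {s(x₁, y₁)}).Reachable x₁ w} ⊆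
      {w | (G.deleteEdges {s(p, q)}).Reachable y₁ w} := by
    rintro w (rfl | hw)
    · exact Reachable.refl _
    · have h2 : (G.deleteEdges {s(p, q)}).Reachable x₁ w :=
        (transfer _ p q hw hAp hAq).mono hmono₁
      have h3 : (G.deleteEdges {s(p, q)}).Adj x₁ y₁ := by
        rw [SimpleGraph.deleteEdges_adj]
        exact ⟨hadj₁, by simpa using Ne.symm hfe₁⟩
      exact h3.reachable.symm.trans h2
  have hTsub : insert y₂ {w | (G.deleteEdges {s(x₂, y₂)}).Reachable x₂ w} ⊆
      {w | (G.deleteEdges {s(p, q)}).Reachable y₂ w} := by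
    rintro w (rfl | hw)
    · exact Reachable.refl _
    · have h2 : (G.deleteEdges {s(p, q)}).Reachable x₂ w :=
        (transfer _ p q hw hBp hBq).mono hmono₂
      have h3 : (G.deleteEdges {s(p, q)}).Adj x₂ y₂ := by
        rw [SimpleGraph.deleteEdges_adj]
        exact ⟨hadj₂, by simpa using Ne.symm hfe₂⟩
      exact h3.reachable.symm.trans h2
  set a := {w | (G.deleteEdges {s(x₁, y₁)}).Reachable x₁ w}.ncard with ha
  set a' := {w | (G.deleteEdges {s(x₁, y₁)}).Reachable y₁ w}.ncard with ha'
  set b := {w | (G.deleteEdges {s(x₂, y₂)}).Reachable x₂ w}.ncard with hb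
  set b' := {w | (G.deleteEdges {s(x₂, y₂)}).Reachable y₂ w}.ncard with hb'
  set s := {w | (G.deleteEdges {s(p, q)}).Reachable y₁ w}.ncard with hs
  set t := {w | (G.deleteEdges {s(p, q)}).Reachable y₂ w}.ncard with ht
  have hsa : a + 1 ≤ s := by
    have hy1mem : y₁ ∉ {w | (G.deleteEdges {s(x₁, y₁)}).Reachable x₁ w} := hnr₁
    rw [ha, hs, ← Set.ncard_insert_of_notMem hy1mem]
    exact Set.ncard_le_ncard hSsub (Set.toFinite _)
  have htb : b + 1 ≤ t := by
    have hy2mem : y₂ ∉ {w | (G.deleteEdges {s(x₂, y₂)}).Reachable x₂ w} := hnr₂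
    rw [hb, ht, ← Set.ncard_insert_of_notMem hy2mem]
    exact Set.ncard_le_ncard hTsub (Set.toFinite _)
  -- arithmetic
  rw [hB1, hA1] at hsep
  rw [mul_assoc, mul_assoc] at hsep
  have hq : b * b' = a * a' := Nat.eq_of_mul_eq_mul_left (by norm_num) hsep
  have hstle : 2 * s * t ≤ 2 * a * a' := hA1 ▸ hF1 ▸ hmax s(p, q)
  have key : ((a : ℤ) - b) * ((a : ℤ) - b') = 0 := by
    have k1 : (a : ℤ) * a' = (b : ℤ) * b' := by exact_mod_cast hq.symm
    have k2 : (a : ℤ) + a' = (Nat.card V : ℤ) := by exact_mod_cast hA2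
    have k3 : (b : ℤ) + b' = (Nat.card V : ℤ) := by exact_mod_cast hB2
    linear_combination (a : ℤ) * k2 - (a : ℤ) * k3 - k1
  rcases mul_eq_zero.mp key with hk | hk
  · -- a = b
    have hab : a = b := by exact_mod_cast sub_eq_zero.mp hk
    have l1 : ((s : ℤ) - (a + 1)) * ((t : ℤ) - (a + 1)) ≥ 0 := by
      apply mul_nonneg
      · have : (a : ℤ) + 1 ≤ s := by exact_mod_cast hsa
        linarith
      · have : (b : ℤ) + 1 ≤ t := by exact_mod_cast htb
        rw [hab]; linarith
    have l2 : (s : ℤ) * t ≤ (a : ℤ) * a' := by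
      have : (2 : ℤ) * s * t ≤ 2 * a * a' := by exact_mod_cast hstle
      linarith
    have l3 : (s : ℤ) + t = (a : ℤ) + a' := by
      have : (s : ℤ) + t = (Nat.card V : ℤ) := by exact_mod_cast hF2
      have k2 : (a : ℤ) + a' = (Nat.card V : ℤ) := by exact_mod_cast hA2
      linarith
    have l4 : (a : ℤ) + 1 ≤ s := by exact_mod_cast hsa
    have l5 : (a : ℤ) + 1 ≤ t := by
      have : (b : ℤ) + 1 ≤ t := by exact_mod_cast htb
      rw [hab]; linarith
    nlinarith [l1, l2, l3, l4, l5]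
  · -- a = b' : impossible by counting
    have hab' : a = b' := by exact_mod_cast sub_eq_zero.mp hk
    omega

private lemma shared {V : Type*} [Fintype V] (G : SimpleGraph V) (hG : G.Connected)
    {e₁ e₂ : Sym2 V} (he₁ : e₁ ∈ G.edgeSet) (he₂ : e₂ ∈ G.edgeSet)
    (hpos : 0 < sep G e₁) (hmax : ∀ f, sep G f ≤ sep G e₁)
    (hsep : sep G e₂ = sep G e₁) (hne : e₁ ≠ e₂) :
    ∃ u ∈ e₁, ∃ v ∈ e₂, (G.deleteEdges {f | G.IsBridge f}).Reachable u v := by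
  by_contra hc
  push_neg at hc
  obtain ⟨x₁, y₁, rfl⟩ := sym2_cases e₁
  obtain ⟨x₂, y₂, rfl⟩ := sym2_cases e₂
  have hb₁ : G.IsBridge s(x₁, y₁) := crit_bridge G hG he₁ hpos
  have hb₂ : G.IsBridge s(x₂, y₂) := crit_bridge G hG he₂ (by rw [hsep]; exact hpos)
  have hsame₁ : (G.deleteEdges {s(x₁, y₁)}).Adj x₂ y₂ := by
    rw [SimpleGraph.deleteEdges_adj]
    exact ⟨G.mem_edgeSet.mp he₂, by simpa using Ne.symm hne⟩
  have hsame₂ : (G.deleteEdges {s(x₂, y₂)}).Adj x₁ y₁ := by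
    rw [SimpleGraph.deleteEdges_adj]
    exact ⟨G.mem_edgeSet.mp he₁, by simpa using hne⟩
  have hsw₁ : s(y₁, x₁) = s(x₁, y₁) := Sym2.eq_swap
  have hsw₂ : s(y₂, x₂) = s(x₂, y₂) := Sym2.eq_swap
  rcases dich G x₁ y₁ x₂ (hG.preconnected x₁ x₂) with o₁ | o₁ <;>
    rcases dich G x₂ y₂ x₁ (hG.preconnected x₂ x₁) with o₂ | o₂
  · exact core G hG y₁ x₁ y₂ x₂ (by rwa [hsw₁]) (by rwa [hsw₂])
      (by rw [hsw₁, hsw₂]; exact hne) (by rw [hsw₁, hsw₂]; exact hsep)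
      (by rw [hsw₁]; exact hmax)
      (by rw [hsw₁]; exact o₁.trans hsame₁.reachable)
      (by rw [hsw₂]; exact o₂.trans hsame₂.reachable)
      (hc x₁ (Sym2.mem_mk_left _ _) x₂ (Sym2.mem_mk_left _ _))
  · exact core G hG y₁ x₁ x₂ y₂ (by rwa [hsw₁]) hb₂
      (by rw [hsw₁]; exact hne) (by rw [hsw₁]; exact hsep)
      (by rw [hsw₁]; exact hmax)
      (by rw [hsw₁]; exact o₁)
      (o₂.trans hsame₂.reachable)
      (hc x₁ (Sym2.mem_mk_left _ _) y₂ (Sym2.mem_mk_right _ _))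
  · exact core G hG x₁ y₁ y₂ x₂ hb₁ (by rwa [hsw₂])
      (by rw [hsw₂]; exact hne) (by rw [hsw₂]; exact hsep) hmax
      (o₁.trans hsame₁.reachable)
      (by rw [hsw₂]; exact o₂)
      (hc y₁ (Sym2.mem_mk_right _ _) x₂ (Sym2.mem_mk_left _ _))
  · exact core G hG x₁ y₁ x₂ y₂ hb₁ hb₂ hne hsep hmax o₁ o₂
      (hc y₁ (Sym2.mem_mk_right _ _) y₂ (Sym2.mem_mk_right _ _))

/-- If a connected graph has at least two critical edges (edges of maximum separation
`sepMax > 0`), then all critical edges are incident with one common vertex of the bridge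
tree, i.e. with a common bridgeless connected component: they form a star in the bridge
tree, and in particular any two of them are at distance 2 there. -/
theorem stmt_13 {V : Type*} [Fintype V] [DecidableEq V] (G : SimpleGraph V)
    (hG : G.Connected) (hpos : 0 < sepMax G) (e₁ e₂ : Sym2 V)
    (h₁ : e₁ ∈ G.edgeSet ∧ sep G e₁ = sepMax G)
    (h₂ : e₂ ∈ G.edgeSet ∧ sep G e₂ = sepMax G) (hne : e₁ ≠ e₂) :
    ∃ z : V, ∀ e : Sym2 V, e ∈ G.edgeSet → sep G e = sepMax G →
      ∃ x ∈ e, (G.deleteEdges {f | G.IsBridge f}).Reachable x z := by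
  classical
  have hpos₁ : 0 < sep G e₁ := by rw [h₁.2]; exact hpos
  have hpos₂ : 0 < sep G e₂ := by rw [h₂.2]; exact hpos
  have hmax₁ : ∀ f, sep G f ≤ sep G e₁ := fun f => by
    rw [h₁.2]; exact Finset.le_sup (Finset.mem_univ f)
  have hmax₂ : ∀ f, sep G f ≤ sep G e₂ := fun f => by
    rw [h₂.2]; exact Finset.le_sup (Finset.mem_univ f)
  have hsep21 : sep G e₂ = sep G e₁ := by rw [h₁.2, h₂.2]
  obtain ⟨u, hu, v, hv, huv⟩ := shared G hG h₁.1 h₂.1 hpos₁ hmax₁ hsep21 hne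
  refine ⟨u, fun e₃ he₃ hsep₃ => ?_⟩
  by_cases h31 : e₃ = e₁
  · exact ⟨u, h31.symm ▸ hu, Reachable.refl u⟩
  by_cases h32 : e₃ = e₂
  · exact ⟨v, h32.symm ▸ hv, huv.symm⟩
  obtain ⟨a, ha1, c, hc3, hac⟩ := shared G hG h₁.1 he₃ hpos₁ hmax₁
    (by rw [h₁.2, hsep₃]) (fun h => h31 h.symm)
  obtain ⟨b, hb2, d, hd3, hbd⟩ := shared G hG h₂.1 he₃ hpos₂ hmax₂
    (by rw [h₂.2, hsep₃]) (fun h => h32 h.symm)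
  by_cases hau : (G.deleteEdges {f | G.IsBridge f}).Reachable a u
  · exact ⟨c, hc3, hac.symm.trans hau⟩
  by_cases hbv : (G.deleteEdges {f | G.IsBridge f}).Reachable b v
  · exact ⟨d, hd3, (hbd.symm.trans hbv).trans huv.symm⟩
  exfalso
  have hb₁ : G.IsBridge e₁ := crit_bridge G hG h₁.1 hpos₁
  have hKle : G.deleteEdges {f | G.IsBridge f} ≤ G.deleteEdges {e₁} :=
    SimpleGraph.deleteEdges_anti (by simpa using hb₁)
  have hneua : u ≠ a := by
    intro h; subst h; exact hau (Reachable.refl u)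
  have he₁eq : e₁ = s(u, a) := (Sym2.mem_and_mem_iff hneua).mp ⟨hu, ha1⟩
  have step₁ : (G.deleteEdges {e₁}).Reachable u v := huv.mono hKle
  have step₂ : (G.deleteEdges {e₁}).Reachable v b := by
    by_cases hvb : v = b
    · rw [hvb]
    · have he₂eq : e₂ = s(v, b) := (Sym2.mem_and_mem_iff hvb).mp ⟨hv, hb2⟩
      refine Adj.reachable ?_
      rw [SimpleGraph.deleteEdges_adj]
      refine ⟨G.mem_edgeSet.mp (he₂eq ▸ h₂.1), ?_⟩
      simpa using fun hh => hne ((he₂eq.trans hh).symm)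
  have step₃ : (G.deleteEdges {e₁}).Reachable b d := hbd.mono hKle
  have step₄ : (G.deleteEdges {e₁}).Reachable d c := by
    by_cases hdc : (G.deleteEdges {f | G.IsBridge f}).Reachable d c
    · exact hdc.mono hKle
    · have hdc' : d ≠ c := by
        intro h; subst h; exact hdc (Reachable.refl d)
      have he₃eq : e₃ = s(d, c) := (Sym2.mem_and_mem_iff hdc').mp ⟨hd3, hc3⟩
      refine Adj.reachable ?_
      rw [SimpleGraph.deleteEdges_adj]
      refine ⟨G.mem_edgeSet.mp (he₃eq ▸ he₃), ?_⟩
      simpa using fun hh => h31 (he₃eq.trans hh)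
  have step₅ : (G.deleteEdges {e₁}).Reachable c a := hac.symm.mono hKle
  have hchain : (G.deleteEdges {e₁}).Reachable u a :=
    step₁.trans (step₂.trans (step₃.trans (step₄.trans step₅)))
  have hb₁' : G.IsBridge s(u, a) := he₁eq ▸ hb₁
  refine bridge_not_reach hb₁' ?_
  rw [← he₁eq]
  exact hchain
end

section
/- For distinct bridges e and e' of a connected graph, one component of G−e is strictly contained in one component of G−e'. -/
open SimpleGraph

private lemma reach_mono {V : Type*} [DecidableEq V] {G : SimpleGraph V} {e : Sym2 V} {u' v' x z : V}
    (he'e : s(u', v') ∈ (G.deleteEdges {e}).edgeSet)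
    (hu' : ¬ (G.deleteEdges {e}).Reachable x u')
    (h : (G.deleteEdges {e}).Reachable x z) :
    (G.deleteEdges {s(u', v')}).Reachable x z := by
  obtain ⟨p⟩ := h
  refine ⟨p.transfer (G.deleteEdges {s(u', v')}) ?_⟩
  intro ed hed
  have hGed : ed ∈ G.edgeSet := SimpleGraph.edgeSet_mono (G.deleteEdges_le {e}) (p.edges_subset_edgeSet hed)
  rw [SimpleGraph.edgeSet_deleteEdges]
  refine ⟨hGed, ?_⟩
  simp only [Set.mem_singleton_iff]
  rintro rfl
  exact hu' ⟨p.takeUntil _ (p.fst_mem_support_of_mem_edges hed)⟩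

/-- For distinct bridges `e` and `e'` of a connected graph, some component of `G − e`
is strictly contained in some component of `G − e'`. -/
theorem stmt_14 {V : Type*} [Fintype V] (G : SimpleGraph V) (hG : G.Connected)
    (e e' : Sym2 V) (he : G.IsBridge e) (he' : G.IsBridge e') (hne : e ≠ e') :
    ∃ x y : V, {z : V | (G.deleteEdges {e}).Reachable x z} ⊂
      {z : V | (G.deleteEdges {e'}).Reachable y z} := by
  classical
  induction e using Sym2.inductionOn with | hf u v =>
  induction e' using Sym2.inductionOn with | hf u' v' =>
  have hAdj : G.Adj u v := he.reachable_iff_adj.mp (hG.preconnected u v)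
  have hAdj' : G.Adj u' v' := he'.reachable_iff_adj.mp (hG.preconnected u' v')
  have hbr : ¬ (G.deleteEdges {s(u,v)}).Reachable u v := isBridge_iff.mp he
  -- e' is an edge of G - e
  have he'e : s(u', v') ∈ (G.deleteEdges {s(u,v)}).edgeSet := by
    rw [SimpleGraph.edgeSet_deleteEdges]
    exact ⟨hAdj', by simpa using Ne.symm hne⟩
  have hreach' : (G.deleteEdges {s(u,v)}).Reachable u' v' := Adj.reachable he'e
  -- choose x : endpoint of e whose component avoids u' and v'; w the other endpoint
  obtain ⟨x, w, hxw, hxu', hxv'⟩ :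
      ∃ x w : V, (G.deleteEdges {s(u',v')}).Adj x w ∧
        ¬ (G.deleteEdges {s(u,v)}).Reachable x u' ∧
        ¬ (G.deleteEdges {s(u,v)}).Reachable x w := by
    have hadj : ∀ a b : V, G.Adj a b → (G.deleteEdges {s(u',v')}).Adj a b ∨ s(a,b) = s(u',v') := by
      intro a b hab
      by_cases h : s(a,b) = s(u',v')
      · exact Or.inr h
      · exact Or.inl (by simp [h, hab])
    have hxwadj : (G.deleteEdges {s(u',v')}).Adj u v := by
      rcases hadj u v hAdj with h | h
      · exact h
      · exact absurd h hne
    by_cases h : (G.deleteEdges {s(u,v)}).Reachable u' u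
    · refine ⟨v, u, hxwadj.symm, ?_, fun hr => hbr hr.symm⟩
      intro hvu'
      exact hbr (hvu'.trans h).symm
    · refine ⟨u, v, hxwadj, fun hr => h hr.symm, hbr⟩
  refine ⟨x, x, ?_, ?_⟩
  · intro z hz
    exact reach_mono he'e hxu' hz
  · intro hsub
    exact hxv' (hsub hxw.reachable)
end

section
/- Let G be a connected graph on n vertices with m edges, v a vertex, and suppose adding an edge incident to v creates a cycle of length ℓ (reducing the sum of relevances of v from R to R'). Then the improvement in disconnection cost (1/m)·R − (1/(m+1))·R' under the simple-minded adversary is at most 1/2 + (1/(m+1))·(ℓ−1)(n−ℓ/2). -/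
open SimpleGraph
open scoped Classical

section aux

variable {V : Type*} [Fintype V]

/-- number of edges whose removal separates v from u -/
noncomputable def sepCnt (G : SimpleGraph V) (v u : V) : ℕ :=
  (Finset.univ.filter fun e : Sym2 V => ¬ (G.deleteEdges {e}).Reachable v u).card

noncomputable def relCnt (G : SimpleGraph V) (e : Sym2 V) (v : V) : ℕ :=
  (Finset.univ.filter fun u : V => ¬ (G.deleteEdges {e}).Reachable v u).card

lemma deleteEdges_eq_self' (G : SimpleGraph V) {e : Sym2 V} (he : e ∉ G.edgeSet) :
    G.deleteEdges {e} = G := by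
  ext a b
  simp only [deleteEdges_adj, Set.mem_singleton_iff]
  refine ⟨fun h => h.1, fun h => ⟨h, fun hs => he ?_⟩⟩
  rw [← hs]; exact h

lemma sep_erase (G : SimpleGraph V) (v : V) {w x : V} (h : G.Adj w x) :
    (Finset.univ.filter fun e : Sym2 V => ¬ (G.deleteEdges {e}).Reachable v w).erase s(w, x)
      = (Finset.univ.filter fun e : Sym2 V => ¬ (G.deleteEdges {e}).Reachable v x).erase s(w, x) := by
  ext f
  simp only [Finset.mem_erase, Finset.mem_filter, Finset.mem_univ, true_and]
  refine and_congr_right fun hf => not_congr ⟨fun hr => hr.trans ?_, fun hr => hr.trans ?_⟩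
  · exact Adj.reachable (by simp [deleteEdges_adj, h, Ne.symm hf])
  · refine Adj.reachable ?_
    rw [deleteEdges_adj]
    refine ⟨h.symm, fun hs => hf ?_⟩
    rw [Set.mem_singleton_iff, Sym2.eq_swap] at hs
    exact hs.symm

lemma claimA {G : SimpleGraph V} :
    ∀ {w v : V} (Q : G.Walk w v), Q.IsPath → ∀ k, k ≤ sepCnt G v w →
      k ≤ ((Q.support.toFinset.filter fun u => sepCnt G v u < k)).card := by
  intro w y Q
  induction Q with
  | nil =>
    intro _ k hk
    have h0 : ∀ u : V, sepCnt G u u = 0 := by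
      intro u
      rw [sepCnt, Finset.card_eq_zero, Finset.filter_eq_empty_iff]
      intro e _
      simp only [not_not]
      exact Reachable.refl u
    rw [h0] at hk
    omega
  | @cons w x v h Q' ih =>
    intro hp k hk
    have hQ' : Q'.IsPath := hp.of_cons
    have henotin : s(w, x) ∉ Q'.edges := by
      have := hp.edges_nodup
      rw [Walk.edges_cons] at this
      exact (List.nodup_cons.1 this).1
    have herase := sep_erase G v h
    have hsubuniv : Q'.support.toFinset ⊆ (Walk.cons h Q').support.toFinset := by
      intro u hu
      rw [List.mem_toFinset] at hu ⊢
      rw [Walk.support_cons]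
      exact List.mem_cons_of_mem _ hu
    by_cases he : (G.deleteEdges {s(w, x)}).Reachable v w
    · -- sepCnt v w ≤ sepCnt v x
      have hle : sepCnt G v w ≤ sepCnt G v x := by
        rw [sepCnt, sepCnt]
        have h1 : (Finset.univ.filter fun e : Sym2 V => ¬ (G.deleteEdges {e}).Reachable v w)
            = (Finset.univ.filter fun e : Sym2 V => ¬ (G.deleteEdges {e}).Reachable v w).erase s(w, x) := by
          rw [Finset.erase_eq_of_notMem]
          simp [he]
        rw [h1, herase]
        exact Finset.card_le_card (Finset.erase_subset _ _)
      have := ih hQ' k (hk.trans hle)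
      exact this.trans (Finset.card_le_card (Finset.filter_subset_filter _ hsubuniv))
    · -- sepCnt v w = sepCnt v x + 1
      have hex : (G.deleteEdges {s(w, x)}).Reachable v x := by
        have hall : ∀ f ∈ Q'.reverse.edges, f ∉ ({s(w, x)} : Set (Sym2 V)) := by
          intro f hf
          rw [Walk.edges_reverse, List.mem_reverse] at hf
          simp only [Set.mem_singleton_iff]
          rintro rfl
          exact henotin hf
        exact ⟨Q'.reverse.toDeleteEdges _ hall⟩
      have heq : sepCnt G v w = sepCnt G v x + 1 := by
        rw [sepCnt, sepCnt]
        have hmemw : s(w, x) ∈ (Finset.univ.filter fun e : Sym2 V => ¬ (G.deleteEdges {e}).Reachable v w) := by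
          simp [he]
        have hmemx : s(w, x) ∉ (Finset.univ.filter fun e : Sym2 V => ¬ (G.deleteEdges {e}).Reachable v x) := by
          simp [hex]
        rw [← Finset.card_erase_add_one hmemw, herase, Finset.erase_eq_of_notMem hmemx]
      rcases Nat.lt_or_ge k (sepCnt G v w) with hlt | hge
      · have hkx : k ≤ sepCnt G v x := by omega
        have := ih hQ' k hkx
        exact this.trans (Finset.card_le_card (Finset.filter_subset_filter _ hsubuniv))
      · -- k = sepCnt v x + 1
        have hkeq : k = sepCnt G v x + 1 := by omega
        set S := Q'.support.toFinset.filter fun u => sepCnt G v u < sepCnt G v x with hS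
        have hcard : sepCnt G v x ≤ S.card := ih hQ' _ le_rfl
        have hxnot : x ∉ S := by
          simp only [hS, Finset.mem_filter]
          rintro ⟨-, hlt⟩
          exact lt_irrefl _ hlt
        have hsub : insert x S ⊆ (Walk.cons h Q').support.toFinset.filter fun u => sepCnt G v u < k := by
          intro u hu
          rw [Finset.mem_insert] at hu
          rw [Finset.mem_filter]
          rcases hu with rfl | hu
          · constructor
            · rw [List.mem_toFinset, Walk.support_cons]
              exact List.mem_cons_of_mem _ Q'.start_mem_support
            · omega
          · rw [hS, Finset.mem_filter] at hu
            exact ⟨hsubuniv hu.1, by omega⟩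
        calc k = sepCnt G v x + 1 := hkeq
        _ ≤ S.card + 1 := by omega
        _ = (insert x S).card := (Finset.card_insert_of_notMem hxnot).symm
        _ ≤ _ := Finset.card_le_card hsub

lemma sumA {G : SimpleGraph V} (hG : G.Connected) (v : V) :
    2 * ∑ w : V, sepCnt G v w ≤ Fintype.card V * (Fintype.card V - 1) := by
  have step1 : ∀ w : V, sepCnt G v w
      ≤ (Finset.univ.filter fun u => sepCnt G v u < sepCnt G v w).card := by
    intro w
    obtain ⟨W⟩ := hG.preconnected w v
    have := claimA W.bypass W.bypass_isPath (sepCnt G v w) le_rfl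
    exact this.trans (Finset.card_le_card (Finset.filter_subset_filter _ (Finset.subset_univ _)))
  have hcf : ∀ w : V, (Finset.univ.filter fun u => sepCnt G v u < sepCnt G v w).card
      = ∑ u : V, if sepCnt G v u < sepCnt G v w then 1 else 0 := fun w => Finset.card_filter _ _
  have hsw : ∑ w : V, ∑ u : V, (if sepCnt G v u < sepCnt G v w then (1:ℕ) else 0)
      = ∑ w : V, ∑ u : V, (if sepCnt G v w < sepCnt G v u then 1 else 0) := Finset.sum_comm
  have hpt : ∀ w u : V, (if sepCnt G v u < sepCnt G v w then (1:ℕ) else 0)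
      + (if sepCnt G v w < sepCnt G v u then 1 else 0) ≤ (if u = w then 0 else 1) := by
    intro w u
    by_cases h : u = w
    · subst h; simp
    · by_cases h1 : sepCnt G v u < sepCnt G v w <;> by_cases h2 : sepCnt G v w < sepCnt G v u <;>
        simp [h, h1, h2] <;> omega
  have hlast : ∀ w : V, ∑ u : V, (if u = w then (0:ℕ) else 1) = Fintype.card V - 1 := by
    intro w
    have : ∑ u : V, (if u = w then (0:ℕ) else 1) = ∑ u : V, (if u ≠ w then 1 else 0) := by
      refine Finset.sum_congr rfl fun u _ => ?_
      by_cases h : u = w <;> simp [h]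
    rw [this, ← Finset.card_filter, Finset.filter_ne', Finset.card_erase_of_mem (Finset.mem_univ w),
      Finset.card_univ]
  calc 2 * ∑ w : V, sepCnt G v w
      ≤ 2 * ∑ w : V, (Finset.univ.filter fun u => sepCnt G v u < sepCnt G v w).card := by
        have := Finset.sum_le_sum (fun w (_ : w ∈ Finset.univ) => step1 w); omega
    _ = ∑ w : V, ∑ u : V, ((if sepCnt G v u < sepCnt G v w then 1 else 0)
          + (if sepCnt G v w < sepCnt G v u then 1 else 0)) := by
        rw [two_mul]
        simp_rw [hcf]
        nth_rewrite 2 [hsw]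
        rw [← Finset.sum_add_distrib]
        simp_rw [← Finset.sum_add_distrib]
    _ ≤ ∑ w : V, ∑ u : V, (if u = w then 0 else 1) :=
        Finset.sum_le_sum fun w _ => Finset.sum_le_sum fun u _ => hpt w u
    _ = Fintype.card V * (Fintype.card V - 1) := by
        simp_rw [hlast]
        rw [Finset.sum_const, Finset.card_univ, smul_eq_mul]

lemma relCnt_eq_sep_sum {G : SimpleGraph V} (hG : G.Connected) (v : V) :
    ∑ e ∈ G.edgeFinset, relCnt G e v = ∑ w : V, sepCnt G v w := by
  have h1 : ∀ e, relCnt G e v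
      = ∑ u : V, if ¬ (G.deleteEdges {e}).Reachable v u then 1 else 0 :=
    fun e => Finset.card_filter _ _
  rw [Finset.sum_congr rfl (fun e (_ : e ∈ G.edgeFinset) => h1 e), Finset.sum_comm]
  refine Finset.sum_congr rfl fun u _ => ?_
  rw [sepCnt, Finset.card_filter]
  refine Finset.sum_subset (Finset.subset_univ _) ?_
  intro e _ he
  rw [if_neg]
  rw [not_not, deleteEdges_eq_self' G (by simpa using he)]
  exact hG.preconnected v u

lemma lemA {G : SimpleGraph V} (hG : G.Connected) (v : V) :
    2 * ∑ e ∈ G.edgeFinset, relCnt G e v ≤ Fintype.card V * (Fintype.card V - 1) := by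
  rw [relCnt_eq_sep_sum hG v]; exact sumA hG v

lemma lemB {G : SimpleGraph V} (hG : G.Connected) (v : V) :
    Fintype.card V ≤ G.edgeFinset.card + 1 := by
  have key : ∀ u : V, u ≠ v → ∃ x, G.Adj u x ∧ G.dist x v + 1 = G.dist u v := by
    intro u hu
    obtain ⟨W, hW⟩ := (hG.preconnected u v).exists_walk_length_eq_dist
    obtain ⟨x, h, q, heqW⟩ := Walk.not_nil_iff.1 (Walk.not_nil_of_ne hu (p := W))
    rw [heqW] at hW
    refine ⟨x, h, ?_⟩
    have h1 : G.dist x v ≤ q.length := dist_le q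
    have h2 : G.dist u v ≤ G.dist u x + G.dist x v := hG.dist_triangle
    have h3 : G.dist u x ≤ 1 := dist_le (Walk.cons h Walk.nil)
    rw [Walk.length_cons] at hW
    omega
  choose f hfadj hfdist using key
  classical
  have hinj : Set.InjOn (fun u : V => if h : u = v then s(v, v) else s(u, f u h))
      ↑(Finset.univ.erase v) := by
    intro u1 hu1 u2 hu2 heq
    simp only [Finset.coe_erase, Set.mem_diff, Set.mem_singleton_iff] at hu1 hu2
    have h1 : u1 ≠ v := hu1.2
    have h2 : u2 ≠ v := hu2.2
    simp only [dif_neg h1, dif_neg h2, Sym2.eq_iff] at heq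
    rcases heq with ⟨h, -⟩ | ⟨ha, hb⟩
    · exact h
    · exfalso
      have d1 := hfdist u1 h1
      have d2 := hfdist u2 h2
      rw [hb] at d1
      rw [← ha] at d2
      omega
  have hmaps : ∀ u ∈ Finset.univ.erase v,
      (if h : u = v then s(v, v) else s(u, f u h)) ∈ G.edgeFinset := by
    intro u hu
    have h1 : u ≠ v := (Finset.mem_erase.1 hu).1
    rw [dif_neg h1, mem_edgeFinset]
    exact (hfadj u h1)
  have := Finset.card_le_card_of_injOn _ hmaps hinj
  rw [Finset.card_erase_of_mem (Finset.mem_univ v), Finset.card_univ] at this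
  omega

lemma reach_sup {H : SimpleGraph V} {v w : V} (hvw : H.Reachable v w) :
    ∀ {a b : V}, (H ⊔ fromEdgeSet {s(v, w)}).Walk a b → H.Reachable a b := by
  intro a b W
  induction W with
  | nil => exact Reachable.refl _
  | cons h' W ih =>
    refine Reachable.trans ?_ ih
    rcases (sup_adj _ _ _ _).1 h' with h1 | h2
    · exact h1.reachable
    · rw [fromEdgeSet_adj, Set.mem_singleton_iff, Sym2.eq_iff] at h2
      rcases h2.1 with ⟨ha, hb⟩ | ⟨ha, hb⟩
      · rw [ha, hb]; exact hvw
      · rw [ha, hb]; exact hvw.symm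

lemma delete_sup {G : SimpleGraph V} {v w : V} {e : Sym2 V} (hne : e ≠ s(v, w)) :
    (G ⊔ fromEdgeSet {s(v, w)}).deleteEdges {e}
      = (G.deleteEdges {e}) ⊔ fromEdgeSet {s(v, w)} := by
  ext a b
  simp only [deleteEdges_adj, sup_adj, fromEdgeSet_adj, Set.mem_singleton_iff]
  constructor
  · rintro ⟨h1 | h2, h3⟩
    · exact Or.inl ⟨h1, h3⟩
    · exact Or.inr h2
  · rintro (⟨h1, h3⟩ | h2)
    · exact ⟨Or.inl h1, h3⟩
    · refine ⟨Or.inr h2, ?_⟩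
      rw [h2.1]
      exact fun hc => hne hc.symm

lemma relCnt_eq_sup {G : SimpleGraph V} {v w : V} {e : Sym2 V} (hne : e ≠ s(v, w))
    (hr : (G.deleteEdges {e}).Reachable v w) :
    relCnt G e v = relCnt (G ⊔ fromEdgeSet {s(v, w)}) e v := by
  rw [relCnt, relCnt]
  congr 1
  ext u; simp only [Finset.mem_filter, Finset.mem_univ, true_and]
  rw [delete_sup hne]
  refine not_congr ⟨fun h => h.mono le_sup_left, fun h => ?_⟩
  obtain ⟨W⟩ := h
  exact reach_sup hr W

lemma pos_bound {G : SimpleGraph V} :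
    ∀ {x v : V} (q : G.Walk x v), q.IsPath →
      (q.edges.map (fun e => relCnt G e v)).sum
        ≤ ∑ k ∈ Finset.range q.length, (Fintype.card V - 1 - k) := by
  intro x v q
  induction q with
  | nil => simp
  | @cons x y v h q' ih =>
    intro hp
    have hq' : q'.IsPath := hp.of_cons
    have henotin : s(x, y) ∉ q'.edges := by
      have := hp.edges_nodup
      rw [Walk.edges_cons] at this
      exact (List.nodup_cons.1 this).1
    have hrel : relCnt G s(x, y) v ≤ Fintype.card V - 1 - q'.length := by
      have hsup : ∀ u ∈ q'.support, (G.deleteEdges {s(x, y)}).Reachable v u := by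
        intro u hu
        have hd : ∀ f ∈ (q'.dropUntil u hu).reverse.edges, f ∉ ({s(x, y)} : Set (Sym2 V)) := by
          intro f hf
          rw [Walk.edges_reverse, List.mem_reverse] at hf
          simp only [Set.mem_singleton_iff]
          rintro rfl
          exact henotin (Walk.edges_dropUntil_subset _ hu hf)
        exact ⟨(q'.dropUntil u hu).reverse.toDeleteEdges _ hd⟩
      have hsubset : (Finset.univ.filter fun u : V => ¬ (G.deleteEdges {s(x, y)}).Reachable v u)
          ⊆ Finset.univ \ q'.support.toFinset := by
        intro u hu
        rw [Finset.mem_filter] at hu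
        rw [Finset.mem_sdiff]
        exact ⟨Finset.mem_univ u, fun hm => hu.2 (hsup u (List.mem_toFinset.1 hm))⟩
      have hcard : (Finset.univ \ q'.support.toFinset).card
          = Fintype.card V - (q'.length + 1) := by
        rw [Finset.card_sdiff_of_subset (Finset.subset_univ _), Finset.card_univ,
          List.toFinset_card_of_nodup hq'.support_nodup, Walk.length_support]
      calc relCnt G s(x, y) v ≤ (Finset.univ \ q'.support.toFinset).card :=
            Finset.card_le_card hsubset
        _ = Fintype.card V - (q'.length + 1) := hcard
        _ = Fintype.card V - 1 - q'.length := by omega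
    rw [Walk.edges_cons, List.map_cons, List.sum_cons, Walk.length_cons,
      Finset.sum_range_succ]
    have := ih hq'
    omega

lemma extract {G : SimpleGraph V} {v w : V} (hvw : v ≠ w) (hna : ¬ G.Adj v w) {a : V}
    (C : (G ⊔ fromEdgeSet {s(v, w)}).Walk a a) (hC : C.IsCycle) (heC : s(v, w) ∈ C.edges) :
    ∃ p : G.Walk v w, p.IsPath ∧ p.length + 1 ≤ C.length := by
  have hedge : ∀ f ∈ (G ⊔ fromEdgeSet {s(v, w)}).edgeSet, f ≠ s(v, w) → f ∈ G.edgeSet := by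
    intro f hf hne
    rw [edgeSet_sup, edgeSet_fromEdgeSet] at hf
    rcases hf with h | h
    · exact h
    · exact absurd (Set.mem_singleton_iff.1 h.1) hne
  have hv : v ∈ C.support := C.fst_mem_support_of_mem_edges heC
  set D := C.rotate v hv with hDdef
  have hDc : D.IsCycle := hC.rotate hv
  have hrot := C.rotate_edges v hv
  have heD : s(v, w) ∈ D.edges := hrot.mem_iff.2 heC
  have hlen : D.length = C.length := by
    rw [← Walk.length_edges, ← Walk.length_edges, hrot.perm.length_eq]
  obtain ⟨x, hadj, q, hDeq⟩ := Walk.not_nil_iff.1 hDc.not_nil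
  have hqnodup : q.support.Nodup := by
    have h1 := hDc.support_nodup
    rw [hDeq, Walk.support_cons, List.tail_cons] at h1
    exact h1
  have hDen : D.edges.Nodup := hDc.edges_nodup
  rw [hDeq, Walk.edges_cons] at hDen
  have hDlen : D.length = q.length + 1 := by rw [hDeq, Walk.length_cons]
  by_cases hxw : x = w
  · -- first edge of the cycle is s(v,w)
    have hnotin : s(v, w) ∉ q.edges := by
      have h1 := (List.nodup_cons.1 hDen).1
      have h2 : s(v, x) = s(v, w) := by rw [hxw]
      rwa [h2] at h1
    have hsub : ∀ f ∈ (q.copy hxw rfl).edges, f ∈ G.edgeSet := by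
      intro f hf
      rw [Walk.edges_copy] at hf
      exact hedge f (q.edges_subset_edgeSet hf) (by rintro rfl; exact hnotin hf)
    let p0 : G.Walk w v := (q.copy hxw rfl).transfer G hsub
    refine ⟨p0.reverse.bypass, Walk.bypass_isPath _, ?_⟩
    have hb := Walk.length_bypass_le p0.reverse
    have h3 : p0.length = q.length := by
      rw [Walk.length_transfer, Walk.length_copy]
    rw [Walk.length_reverse] at hb
    omega
  · -- the edge s(v,w) lies inside q
    have hewq : s(v, w) ∈ q.edges := by
      rw [hDeq, Walk.edges_cons] at heD
      rcases List.mem_cons.1 heD with h | h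
      · exact absurd (Sym2.congr_right.1 h.symm) hxw
      · exact h
    have hw_supp : w ∈ q.support := q.snd_mem_support_of_mem_edges hewq
    set q1 := q.takeUntil w hw_supp with hq1def
    have hspec := q.take_spec hw_supp
    have hvnot : v ∉ q1.support := by
      intro hvin
      have hsupp_eq : q.support = q1.support ++ (q.dropUntil w hw_supp).support.tail := by
        rw [← Walk.support_append, hspec]
      have hnd := hqnodup
      rw [hsupp_eq] at hnd
      have hdisj := List.disjoint_of_nodup_append hnd
      have hvtail : v ∈ (q.dropUntil w hw_supp).support.tail := by
        have hv_end : v ∈ (q.dropUntil w hw_supp).support := Walk.end_mem_support _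
        rw [Walk.support_eq_cons] at hv_end
        rcases List.mem_cons.1 hv_end with h | h
        · exact absurd h.symm (Ne.symm hvw)
        · exact h
      exact hdisj hvin hvtail
    have he_q1 : s(v, w) ∉ q1.edges := fun hf => hvnot (q1.fst_mem_support_of_mem_edges hf)
    have hWedges : ∀ f ∈ (Walk.cons hadj q1).edges, f ∈ G.edgeSet := by
      intro f hf
      rw [Walk.edges_cons] at hf
      rcases List.mem_cons.1 hf with h | h
      · subst h
        refine hedge _ ((mem_edgeSet _).2 hadj) ?_
        intro hc
        exact hxw (Sym2.congr_right.1 hc)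
      · refine hedge f (q.edges_subset_edgeSet (Walk.edges_takeUntil_subset _ hw_supp h)) ?_
        rintro rfl
        exact he_q1 h
    let p0 : G.Walk v w := (Walk.cons hadj q1).transfer G hWedges
    refine ⟨p0.bypass, Walk.bypass_isPath _, ?_⟩
    have hb := Walk.length_bypass_le p0
    have hp0 : p0.length = q1.length + 1 := by
      rw [Walk.length_transfer, Walk.length_cons]
    have hq1len : q1.length + 1 ≤ q.length := by
      rw [hq1def]
      have hlenspec := congrArg Walk.length hspec
      rw [Walk.length_append] at hlenspec
      have hdro : 0 < (q.dropUntil w hw_supp).length := by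
        by_contra h0
        have h00 : (q.dropUntil w hw_supp).length = 0 := by omega
        exact hvw (Walk.eq_of_length_eq_zero h00).symm
      omega
    omega

lemma rel_eq (G : SimpleGraph V) (e : Sym2 V) (v : V) : rel G e v = relCnt G e v := by
  rw [rel, relCnt, Nat.card_eq_fintype_card, Fintype.card_subtype]

lemma edgeFinset_eq (G : SimpleGraph V) [Fintype G.edgeSet] :
    G.edgeSet.toFinset = G.edgeFinset := by
  ext e
  simp [mem_edgeFinset]

lemma RSum_eq (G : SimpleGraph V) : ∀ v : V, RSum G v = ∑ e ∈ G.edgeFinset, relCnt G e v := by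
  intro v
  rw [RSum]
  simp_rw [rel_eq]
  rw [← Set.coe_toFinset G.edgeSet, finsum_mem_coe_finset, edgeFinset_eq]

lemma mem_edgeFinset' {G : SimpleGraph V} {inst : Fintype G.edgeSet} {e : Sym2 V} :
    e ∈ @edgeFinset V G inst ↔ e ∈ G.edgeSet := @Set.mem_toFinset _ _ inst _

lemma lemC {G : SimpleGraph V} {v w : V} (hna : ¬ G.Adj v w)
    {p : G.Walk v w} (hp : p.IsPath) :
    RSum G v ≤ RSum (G ⊔ fromEdgeSet {s(v, w)}) v
      + ∑ k ∈ Finset.range p.length, (Fintype.card V - 1 - k) := by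
  rw [RSum_eq, RSum_eq]
  have hpe : p.edges.toFinset ⊆ G.edgeFinset := by
    intro e he
    rw [List.mem_toFinset] at he
    rw [mem_edgeFinset]
    exact p.edges_subset_edgeSet he
  rw [← Finset.sum_sdiff hpe]
  have h1 : ∀ e ∈ G.edgeFinset \ p.edges.toFinset,
      relCnt G e v = relCnt (G ⊔ fromEdgeSet {s(v, w)}) e v := by
    intro e he
    rw [Finset.mem_sdiff] at he
    have heE : e ∈ G.edgeSet := mem_edgeFinset.1 he.1
    have hne : e ≠ s(v, w) := by
      rintro rfl
      exact hna ((mem_edgeSet _).1 heE)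
    have hnp : e ∉ p.edges := fun hc => he.2 (List.mem_toFinset.2 hc)
    have hreach : (G.deleteEdges {e}).Reachable v w := by
      have hall : ∀ f ∈ p.edges, f ∉ ({e} : Set (Sym2 V)) := by
        intro f hf
        simp only [Set.mem_singleton_iff]
        rintro rfl
        exact hnp hf
      exact ⟨p.toDeleteEdges _ hall⟩
    exact relCnt_eq_sup hne hreach
  rw [Finset.sum_congr rfl h1]
  have h3 : ∑ e ∈ p.edges.toFinset, relCnt G e v
      ≤ ∑ k ∈ Finset.range p.length, (Fintype.card V - 1 - k) := by
    rw [List.sum_toFinset _ (Walk.edges_nodup_of_support_nodup hp.support_nodup)]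
    have hrev := pos_bound p.reverse hp.reverse
    rw [Walk.edges_reverse, Walk.length_reverse, List.map_reverse, List.sum_reverse] at hrev
    exact hrev
  refine add_le_add (Finset.sum_le_sum_of_subset ?_) h3
  intro e he
  refine mem_edgeFinset'.2 ?_
  rw [edgeSet_sup]
  exact Or.inl (mem_edgeFinset.1 (Finset.sdiff_subset he))

lemma arith_final (R R' Mr L N : ℝ) (hR'0 : 0 ≤ R')
    (hM1 : 1 ≤ Mr) (key1 : 2 * R ≤ Mr * (Mr + 1))
    (key2 : R ≤ R' + (L - 1) * (N - L / 2)) :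
    R / Mr - R' / (Mr + 1) ≤ 1 / 2 + 1 / (Mr + 1) * (L - 1) * (N - L / 2) := by
  have hMpos : (0 : ℝ) < Mr := by linarith
  have hM1pos : (0 : ℝ) < Mr + 1 := by linarith
  have expand : R / Mr - R' / (Mr + 1)
      = R / (Mr * (Mr + 1)) + (R - R') / (Mr + 1) := by
    field_simp
    ring
  rw [expand]
  have e1 : R / (Mr * (Mr + 1)) ≤ 1 / 2 := by
    rw [div_le_iff₀ (by positivity)]
    linarith
  have e2 : (R - R') / (Mr + 1) ≤ 1 / (Mr + 1) * (L - 1) * (N - L / 2) := by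
    have h6 : (R - R') / (Mr + 1) ≤ ((L - 1) * (N - L / 2)) / (Mr + 1) := by
      gcongr
      linarith
    calc (R - R') / (Mr + 1) ≤ _ := h6
      _ = 1 / (Mr + 1) * (L - 1) * (N - L / 2) := by ring
  linarith


end aux

/-- If player `v` builds a new edge `{v,w}` creating a cycle of length `ℓ`, then her
improvement in disconnection cost `R/m − R'/(m+1)` under the simple-minded adversary is
at most `1/2 + (1/(m+1))·(ℓ−1)·(n−ℓ/2)`. -/
theorem stmt_18 {V : Type*} [Fintype V] (G : SimpleGraph V) (hG : G.Connected)
    (v w : V) (hvw : v ≠ w) (hna : ¬ G.Adj v w) (a : V)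
    (C : (G ⊔ fromEdgeSet {s(v, w)}).Walk a a) (hC : C.IsCycle)
    (heC : s(v, w) ∈ C.edges) :
    (RSum G v : ℝ) / (Nat.card G.edgeSet : ℝ) -
      (RSum (G ⊔ fromEdgeSet {s(v, w)}) v : ℝ) / ((Nat.card G.edgeSet : ℝ) + 1) ≤
    1 / 2 + (1 / ((Nat.card G.edgeSet : ℝ) + 1)) *
      ((C.length : ℝ) - 1) * ((Fintype.card V : ℝ) - (C.length : ℝ) / 2) := by
  have hn2 : 2 ≤ Fintype.card V := Fintype.one_lt_card_iff_nontrivial.2 ⟨⟨v, w, hvw⟩⟩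
  have hB := lemB hG v
  have hA := lemA hG v
  obtain ⟨p, hp, hpl⟩ := extract hvw hna C hC heC
  have hCle := lemC hna hp
  have hm : Nat.card G.edgeSet = G.edgeFinset.card := by
    rw [Nat.card_coe_set_eq, Set.ncard_eq_toFinset_card', edgeFinset_eq]
  have hL3 : 3 ≤ C.length := hC.three_le_length
  have hLn : C.length ≤ Fintype.card V := by
    have h1 := hC.support_nodup.length_le_card
    have h2 : C.support.tail.length = C.length := by
      rw [List.length_tail, Walk.length_support]
      omega
    omega
  have ht_lt : p.length < Fintype.card V := hp.length_lt
  have ht1 : 1 ≤ p.length := by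
    by_contra h0
    have h00 : p.length = 0 := by omega
    exact hvw (Walk.eq_of_length_eq_zero h00)
  have hm1 : 1 ≤ G.edgeFinset.card := by omega
  -- pass to the reals
  set n := Fintype.card V with hn
  set m := G.edgeFinset.card with hmdef
  set L := C.length with hL
  set t := p.length with ht
  rw [hm]
  rw [RSum_eq G v] at hCle ⊢
  have hRA : 2 * ((∑ e ∈ G.edgeFinset, relCnt G e v : ℕ) : ℝ) ≤ (n : ℝ) * ((n : ℝ) - 1) := by
    have hnn : ((n * (n - 1) : ℕ) : ℝ) = (n : ℝ) * ((n : ℝ) - 1) := by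
      rw [Nat.cast_mul, Nat.cast_sub (by omega : 1 ≤ n)]
      norm_num
    have h0 : ((2 * ∑ e ∈ G.edgeFinset, relCnt G e v : ℕ) : ℝ) ≤ ((n * (n - 1) : ℕ) : ℝ) :=
      Nat.cast_le.2 hA
    rw [Nat.cast_mul, hnn] at h0
    have h2' : ((2 : ℕ) : ℝ) = (2 : ℝ) := by norm_num
    rw [h2'] at h0
    exact h0
  have hBn : (n : ℝ) ≤ (m : ℝ) + 1 := by
    have : ((n : ℕ) : ℝ) ≤ ((m + 1 : ℕ) : ℝ) := Nat.cast_le.2 hB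
    push_cast at this
    linarith
  have hSle : ((∑ k ∈ Finset.range t, (n - 1 - k) : ℕ) : ℝ)
      ≤ ((L : ℝ) - 1) * ((n : ℝ) - (L : ℝ) / 2) := by
    rw [Nat.cast_sum]
    have hcast : ∀ k ∈ Finset.range t, ((n - 1 - k : ℕ) : ℝ) = (n : ℝ) - 1 - (k : ℝ) := by
      intro k hk
      rw [Finset.mem_range] at hk
      have h1 : n - 1 - k = n - (1 + k) := by omega
      rw [h1, Nat.cast_sub (by omega : 1 + k ≤ n)]
      push_cast
      ring
    rw [Finset.sum_congr rfl hcast]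
    have hgauss : ∑ k ∈ Finset.range t, ((k : ℝ)) = (t : ℝ) * ((t : ℝ) - 1) / 2 := by
      have h2 := Finset.sum_range_id_mul_two t
      have h3 : ((∑ i ∈ Finset.range t, i) * 2 : ℕ) = (t * (t - 1) : ℕ) := h2
      have h4 := congrArg (Nat.cast (R := ℝ)) h3
      push_cast [Nat.cast_sub (by omega : 1 ≤ t)] at h4
      linarith
    have hsplit : ∑ k ∈ Finset.range t, ((n : ℝ) - 1 - (k : ℝ))
        = (t : ℝ) * ((n : ℝ) - 1) - (t : ℝ) * ((t : ℝ) - 1) / 2 := by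
      rw [Finset.sum_sub_distrib, Finset.sum_const, Finset.card_range, nsmul_eq_mul, hgauss]
    rw [hsplit]
    have htL : (t : ℝ) + 1 ≤ (L : ℝ) := by
      have : ((t + 1 : ℕ) : ℝ) ≤ ((L : ℕ) : ℝ) := Nat.cast_le.2 hpl
      push_cast at this
      linarith
    have hLnR : (L : ℝ) ≤ (n : ℝ) := Nat.cast_le.2 hLn
    have ht0 : (1 : ℝ) ≤ (t : ℝ) := by exact_mod_cast ht1
    nlinarith [mul_nonneg (by linarith : (0:ℝ) ≤ (L : ℝ) - 1 - (t : ℝ))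
      (by linarith : (0:ℝ) ≤ 2 * (n : ℝ) - (t : ℝ) - (L : ℝ))]
  have hRC : ((∑ e ∈ G.edgeFinset, relCnt G e v : ℕ) : ℝ)
      ≤ (RSum (G ⊔ fromEdgeSet {s(v, w)}) v : ℝ) + ((L : ℝ) - 1) * ((n : ℝ) - (L : ℝ) / 2) := by
    have h5 : ((∑ e ∈ G.edgeFinset, relCnt G e v : ℕ) : ℝ)
        ≤ (RSum (G ⊔ fromEdgeSet {s(v, w)}) v : ℝ)
          + ((∑ k ∈ Finset.range t, (n - 1 - k) : ℕ) : ℝ) := by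
      have h := (Nat.cast_le (α := ℝ)).2 hCle
      rw [Nat.cast_add] at h
      exact h
    linarith
  exact arith_final _ _ _ _ _ (by positivity) (by exact_mod_cast hm1)
    (by nlinarith) hRC
end

section
/- In the simple-minded adversary model with unilateral link formation, no Nash equilibrium graph contains a cycle of length ℓ < α + 1/2. -/
open SimpleGraph

/-- The final graph under unilateral link formation: `u` and `v` are linked iff one of
them requested the edge. -/
def finalGraph {V : Type*} [DecidableEq V] (S : V → Finset V) : SimpleGraph V where
  Adj u v := u ≠ v ∧ (v ∈ S u ∨ u ∈ S v)
  symm := ⟨by rintro u v ⟨h1, h2⟩; exact ⟨h1.symm, h2.symm⟩⟩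
  loopless := ⟨fun u h => h.1 rfl⟩

/-- Individual cost of player `v`: building cost `|S v|·α` plus disconnection cost
`(1/m)·R(v)` under the simple-minded adversary. -/
noncomputable def cost {V : Type*} [DecidableEq V] (α : ℝ) (S : V → Finset V) (v : V) : ℝ :=
  (S v).card * α +
    (∑ᶠ e ∈ (finalGraph S).edgeSet, (rel (finalGraph S) e v : ℝ)) /
      (Nat.card (finalGraph S).edgeSet : ℝ)

/-- Nash equilibrium: the final graph is connected (else disconnection cost is `∞`), and
no player can strictly improve by changing her own strategy (deviations producing a
disconnected graph incur infinite cost and hence are never improvements). -/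
def IsNE {V : Type*} [DecidableEq V] (α : ℝ) (S : V → Finset V) : Prop :=
  (finalGraph S).Connected ∧
    ∀ (v : V) (S' : V → Finset V), (∀ u, u ≠ v → S' u = S u) →
      (finalGraph S').Connected → cost α S v ≤ cost α S' v

namespace Aux

variable {V : Type*}

lemma reroute {G : SimpleGraph V} {u w : V}
    (h : (G.deleteEdges {s(u,w)}).Reachable u w) {x y : V} (hxy : G.Reachable x y) :
    (G.deleteEdges {s(u,w)}).Reachable x y := by
  obtain ⟨p⟩ := hxy
  induction p with
  | nil => exact Reachable.refl _
  | @cons a b c hadj q ih =>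
    refine Reachable.trans ?_ ih
    by_cases hc : s(a, b) = s(u, w)
    · rcases Sym2.eq_iff.mp hc with ⟨rfl, rfl⟩ | ⟨rfl, rfl⟩
      · exact h
      · exact h.symm
    · exact (SimpleGraph.deleteEdges_adj.mpr ⟨hadj, by simpa using hc⟩).reachable

lemma walk_prefix {G : SimpleGraph V} {u w : V} (p : G.Walk u w) (i : ℕ) :
    ∃ q : G.Walk u (p.getVert i), q.length ≤ i := by
  induction p generalizing i with
  | @nil a =>
    have h : (Walk.nil : G.Walk a a).getVert i = a :=
      Walk.getVert_of_length_le _ (by simp)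
    exact ⟨(Walk.nil : G.Walk a a).copy rfl h.symm, by simp⟩
  | @cons a b c hadj q ih =>
    cases i with
    | zero => exact ⟨(Walk.nil : G.Walk a a).copy rfl ((Walk.getVert_zero _)).symm, by simp⟩
    | succ i =>
      obtain ⟨r, hr⟩ := ih i
      exact ⟨(Walk.cons hadj r).copy rfl (Walk.getVert_cons_succ _ _).symm,
        by simpa using Nat.succ_le_succ hr⟩

lemma walk_suffix {G : SimpleGraph V} {u w : V} (p : G.Walk u w) (i : ℕ) (hi : i ≤ p.length) :
    ∃ q : G.Walk (p.getVert i) w, q.length + i ≤ p.length := by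
  induction p generalizing i with
  | @nil a =>
    simp only [Walk.length_nil, Nat.le_zero] at hi
    subst hi
    exact ⟨(Walk.nil : G.Walk a a).copy (Walk.getVert_zero _).symm rfl, by simp⟩
  | @cons a b c hadj q ih =>
    cases i with
    | zero =>
      exact ⟨(Walk.cons hadj q).copy (Walk.getVert_zero _).symm rfl, by simp⟩
    | succ i =>
      obtain ⟨r, hr⟩ := ih i (by simpa using hi)
      refine ⟨r.copy (Walk.getVert_cons_succ _ _).symm rfl, ?_⟩
      simp only [Walk.length_copy, Walk.length_cons]
      omega

lemma rel_le [Fintype V] (G : SimpleGraph V) (e : Sym2 V) (v : V) :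
    rel G e v ≤ Fintype.card V - 1 := by
  classical
  have h1 : rel G e v ≤ Nat.card {w : V // w ≠ v} := by
    refine Nat.card_le_card_of_injective
      (fun x => ⟨x.1, fun h => x.2 (by rw [h])⟩) ?_
    intro x y hxy
    simpa [Subtype.ext_iff] using congrArg Subtype.val hxy
  have h2 : Nat.card {w : V // w ≠ v} = Fintype.card V - 1 := by
    rw [Nat.card_eq_fintype_card]
    have := Fintype.card_subtype_compl (fun w : V => w = v)
    simpa [Fintype.card_subtype_eq] using this
  omega

lemma double_count [Fintype V] [DecidableEq V] (f : V → ℕ) :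
    2 * ∑ w : V, (Finset.univ.filter fun x => f x < f w).card ≤
      Fintype.card V * (Fintype.card V - 1) := by
  classical
  set T : Finset (V × V) := Finset.univ.filter (fun p => f p.1 < f p.2) with hT
  have hsum : ∑ w : V, (Finset.univ.filter fun x => f x < f w).card = T.card := by
    rw [hT, Finset.card_filter, ← Finset.univ_product_univ, Finset.sum_product]
    rw [Finset.sum_comm]
    refine Finset.sum_congr rfl fun w _ => ?_
    rw [Finset.card_filter]
  rw [hsum]
  have hdisj : Disjoint T (T.image Prod.swap) := by
    rw [Finset.disjoint_left]
    rintro ⟨x, y⟩ hx hy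
    obtain ⟨⟨a, b⟩, hab, heq⟩ := Finset.mem_image.mp hy
    have hb : b = x := congrArg Prod.fst heq
    have ha : a = y := congrArg Prod.snd heq
    subst hb; subst ha
    simp only [hT, Finset.mem_filter, Finset.mem_univ, true_and] at hx hab
    omega
  have hsub : T ∪ T.image Prod.swap ⊆ Finset.univ.offDiag := by
    rintro ⟨x, y⟩ h
    rw [Finset.mem_offDiag]
    refine ⟨Finset.mem_univ _, Finset.mem_univ _, ?_⟩
    have hlt : f x < f y ∨ f y < f x := by
      rcases Finset.mem_union.mp h with h | h
      · left; simpa [hT] using h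
      · obtain ⟨⟨a, b⟩, hab, heq⟩ := Finset.mem_image.mp h
        have hb : b = x := congrArg Prod.fst heq
        have ha : a = y := congrArg Prod.snd heq
        subst hb; subst ha
        right
        simpa [hT] using hab
    intro hxy
    have hxy' : x = y := hxy
    subst hxy'
    omega
  have hcard := Finset.card_le_card hsub
  rw [Finset.card_union_of_disjoint hdisj,
    Finset.card_image_of_injective _ Prod.swap_injective] at hcard
  have hoff : (Finset.univ : Finset V).offDiag.card =
      Fintype.card V * (Fintype.card V - 1) := by
    rw [Finset.offDiag_card, Nat.mul_sub, mul_one, Finset.card_univ]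
  omega

lemma card_edge_ge [Fintype V] [DecidableEq V] (G : SimpleGraph V) (hconn : G.Connected) :
    Fintype.card V ≤ (G.edgeSet.toFinite.toFinset).card + 1 := by
  classical
  obtain ⟨v₀⟩ := hconn.nonempty
  have Hex : ∀ w : V, ∃ pr : Sym2 V × V, w ≠ v₀ →
      pr.1 ∈ G.edgeSet ∧ pr.1 = s(w, pr.2) ∧ G.dist v₀ pr.2 < G.dist v₀ w := by
    intro w
    by_cases hw : w = v₀
    · exact ⟨(s(v₀, v₀), v₀), fun h => absurd hw h⟩
    · have hr : G.Reachable v₀ w := hconn v₀ w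
      obtain ⟨p, hp, hlen⟩ := hr.exists_path_of_dist
      have hk : 0 < G.dist v₀ w := hr.pos_dist_of_ne (Ne.symm hw)
      set q := p.reverse with hq
      have hqlen : q.length = G.dist v₀ w := by rw [hq, Walk.length_reverse, hlen]
      have hqnil : ¬ q.Nil := by
        rw [Walk.nil_iff_length_eq, hqlen]
        omega
      refine ⟨(s(w, q.getVert 1), q.getVert 1), fun _ => ⟨?_, rfl, ?_⟩⟩
      · exact (q.adj_snd hqnil)
      · have h1 : G.dist (q.getVert 1) v₀ ≤ q.tail.length := dist_le _
        have h2 : q.tail.length + 1 = q.length := Walk.length_tail_add_one hqnil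
        have h3 : G.dist v₀ (q.getVert 1) = G.dist (q.getVert 1) v₀ := dist_comm
        show G.dist v₀ (q.getVert 1) < G.dist v₀ w
        omega
  choose fp hfp using Hex
  have hmaps : ∀ w ∈ Finset.univ.erase v₀, (fp w).1 ∈ G.edgeSet.toFinite.toFinset := by
    intro w hw
    rw [Set.Finite.mem_toFinset]
    exact ((hfp w (Finset.mem_erase.mp hw).1)).1
  have hinj : Set.InjOn (fun w => (fp w).1) ↑(Finset.univ.erase v₀) := by
    intro x hx y hy hxy
    simp only [Finset.coe_erase, Set.mem_diff, Set.mem_singleton_iff] at hx hy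
    obtain ⟨hm1, he1, hd1⟩ := hfp x hx.2
    obtain ⟨hm2, he2, hd2⟩ := hfp y hy.2
    simp only at hxy
    rw [he1, he2] at hxy
    rcases Sym2.eq_iff.mp hxy with ⟨h1, _⟩ | ⟨h1, h2⟩
    · exact h1
    · exfalso
      rw [h2] at hd1
      rw [← h1] at hd2
      omega
  have hcard := Finset.card_le_card_of_injOn _ hmaps hinj
  rw [Finset.card_erase_of_mem (Finset.mem_univ _), Finset.card_univ] at hcard
  omega

lemma rel_sum_le [Fintype V] [DecidableEq V] (G : SimpleGraph V) (hconn : G.Connected) (v : V) :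
    2 * ∑ e ∈ G.edgeSet.toFinite.toFinset, rel G e v ≤
      Fintype.card V * (Fintype.card V - 1) := by
  classical
  set EF := G.edgeSet.toFinite.toFinset with hEF
  have hrel : ∀ e, rel G e v =
      (Finset.univ.filter fun w => ¬(G.deleteEdges {e}).Reachable v w).card := by
    intro e; rw [rel, Nat.card_eq_fintype_card, Fintype.card_subtype]
  have hswap : ∑ e ∈ EF, rel G e v =
      ∑ w : V, (EF.filter fun e => ¬(G.deleteEdges {e}).Reachable v w).card := by
    simp_rw [hrel, Finset.card_filter]
    exact Finset.sum_comm
  rw [hswap]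
  have hb : ∀ w : V, (EF.filter fun e => ¬(G.deleteEdges {e}).Reachable v w).card ≤
      (Finset.univ.filter fun x => G.dist v x < G.dist v w).card := by
    intro w
    by_cases hw : w = v
    · have hfe : (EF.filter fun e => ¬(G.deleteEdges {e}).Reachable v w) = ∅ := by
        subst hw
        exact Finset.filter_false_of_mem fun e _ => not_not_intro (Reachable.refl _)
      rw [hfe]
      simp
    · obtain ⟨p, hp, hlen⟩ := (hconn v w).exists_path_of_dist
      have hk : 0 < G.dist v w := (hconn v w).pos_dist_of_ne (Ne.symm hw)
      have hsub : (EF.filter fun e => ¬(G.deleteEdges {e}).Reachable v w) ⊆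
          p.edges.toFinset := by
        intro e he
        simp only [Finset.mem_filter] at he
        rw [List.mem_toFinset]
        by_contra hne
        exact he.2 ⟨p.toDeleteEdges {e}
          (fun f hf => by
            simp only [Set.mem_singleton_iff]
            rintro rfl
            exact hne hf)⟩
      have h1 := Finset.card_le_card hsub
      have h2 : p.edges.toFinset.card = G.dist v w := by
        rw [List.toFinset_card_of_nodup hp.isTrail.edges_nodup, Walk.length_edges, hlen]
      have hgv : ∀ i, i ≤ G.dist v w → G.dist v (p.getVert i) = i := by
        intro i hik
        obtain ⟨q1, hq1⟩ := walk_prefix p i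
        obtain ⟨q2, hq2⟩ := walk_suffix p i (by omega)
        have d1 : G.dist v (p.getVert i) ≤ i := le_trans (dist_le q1) hq1
        have d2 := dist_le q2
        have d3 : G.dist v w ≤ G.dist v (p.getVert i) + G.dist (p.getVert i) w :=
          hconn.dist_triangle
        rw [hlen] at hq2
        omega
      have h3 : G.dist v w ≤ (Finset.univ.filter fun x => G.dist v x < G.dist v w).card := by
        have := Finset.card_le_card_of_injOn (fun i => p.getVert i)
          (s := Finset.range (G.dist v w))
          (t := Finset.univ.filter fun x => G.dist v x < G.dist v w)
          (fun i hi => by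
            rw [Finset.mem_coe, Finset.mem_filter]
            refine ⟨Finset.mem_univ _, ?_⟩
            rw [Finset.mem_coe, Finset.mem_range] at hi
            rw [hgv i (le_of_lt hi)]
            exact hi)
          (fun i hi j hj hij => by
            simp only [Finset.coe_range, Set.mem_Iio] at hi hj
            have h4 := hgv i (le_of_lt hi)
            have h5 := hgv j (le_of_lt hj)
            simp only [] at hij
            rw [hij] at h4
            omega)
        simpa using this
      omega
  calc 2 * ∑ w : V, (EF.filter fun e => ¬(G.deleteEdges {e}).Reachable v w).card
      ≤ 2 * ∑ w : V, (Finset.univ.filter fun x => G.dist v x < G.dist v w).card := by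
        have := Finset.sum_le_sum (fun w (_ : w ∈ Finset.univ) => hb w)
        omega
    _ ≤ _ := double_count (fun x => G.dist v x)

lemma rel_deleteEdges_eq {G : SimpleGraph V} {a x y : V} (C : G.Walk a a) (hC : C.IsCycle)
    (he : s(x,y) ∈ C.edges) {e' : Sym2 V} (he' : e' ∉ C.edges) (v : V) :
    rel (G.deleteEdges {s(x,y)}) e' v = rel G e' v := by
  set H := G.deleteEdges {e'} with hH
  have hsub : ∀ f ∈ C.edges, f ∈ H.edgeSet := by
    intro f hf
    rw [hH, edgeSet_deleteEdges]
    refine ⟨C.edges_subset_edgeSet hf, ?_⟩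
    intro hmem
    rw [Set.mem_singleton_iff] at hmem
    subst hmem
    exact he' hf
  have hre : (H \ fromEdgeSet {s(x,y)}).Reachable x y :=
    (adj_and_reachable_delete_edges_iff_exists_cycle.mpr
      ⟨a, C.transfer H hsub, hC.transfer hsub, by rwa [Walk.edges_transfer]⟩).2
  have hre' : (H.deleteEdges {s(x,y)}).Reachable x y := hre
  have key : ∀ z, ((H.deleteEdges {s(x,y)}).Reachable v z ↔ H.Reachable v z) := by
    intro z
    constructor
    · exact fun h => h.mono (deleteEdges_le _)
    · exact fun h => reroute hre' h
  have hgeq : (G.deleteEdges {s(x,y)}).deleteEdges {e'} = H.deleteEdges {s(x,y)} := by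
    rw [hH, deleteEdges_deleteEdges, deleteEdges_deleteEdges, Set.union_comm]
  simp only [rel, hgeq]
  exact Nat.card_congr (Equiv.subtypeEquivRight fun z => by rw [key z, hH])

lemma finalGraph_adj [DecidableEq V] {S : V → Finset V} {x y : V} :
    (finalGraph S).Adj x y ↔ x ≠ y ∧ (y ∈ S x ∨ x ∈ S y) := Iff.rfl

lemma first_edge_mem {G : SimpleGraph V} {a b : V} (p : G.Walk a b) (hp : ¬p.Nil) :
    s(a, p.getVert 1) ∈ p.edges := by
  cases p with
  | nil => simp at hp
  | @cons a c b h q =>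
    have : (Walk.cons h q).getVert 1 = c := by
      rw [Walk.getVert_cons_succ, Walk.getVert_zero]
    rw [this]
    simp

lemma finalGraph_update_eq [DecidableEq V] {S : V → Finset V} {u w : V}
    (hbuy : w ∈ S u) (hrev : u ∈ S w) :
    finalGraph (Function.update S u (S u \ {w})) = finalGraph S := by
  ext x y
  simp only [finalGraph_adj, Function.update_apply, Finset.mem_sdiff, Finset.mem_singleton]
  by_cases hx : x = u <;> by_cases hy : y = u <;>
    by_cases hxw : x = w <;> by_cases hyw : y = w <;>
    subst_vars <;> simp_all <;> tauto

lemma finalGraph_update_del [DecidableEq V] {S : V → Finset V} {u w : V}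
    (hbuy : w ∈ S u) (hrev : u ∉ S w) (hne : u ≠ w) :
    finalGraph (Function.update S u (S u \ {w})) =
      (finalGraph S).deleteEdges {s(u,w)} := by
  ext x y
  simp only [finalGraph_adj, deleteEdges_adj, Set.mem_singleton_iff, Sym2.eq_iff,
    Function.update_apply, Finset.mem_sdiff, Finset.mem_singleton]
  by_cases hx : x = u <;> by_cases hy : y = u <;>
    by_cases hxw : x = w <;> by_cases hyw : y = w <;>
    subst_vars <;> simp_all <;> tauto

lemma cost_eq [Fintype V] [DecidableEq V] (α : ℝ) (S : V → Finset V) (v : V) :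
    cost α S v = ((S v).card : ℝ) * α +
      (∑ e ∈ (finalGraph S).edgeSet.toFinite.toFinset, (rel (finalGraph S) e v : ℝ)) /
        (((finalGraph S).edgeSet.toFinite.toFinset).card : ℝ) := by
  rw [cost]
  have h1 : ((Nat.card ((finalGraph S).edgeSet) : ℕ) : ℝ) =
      (((finalGraph S).edgeSet.toFinite.toFinset.card : ℕ) : ℝ) := by
    rw [Nat.card_coe_set_eq, Set.ncard_eq_toFinset_card _ ((finalGraph S).edgeSet.toFinite)]
  have h2 : (∑ᶠ e ∈ (finalGraph S).edgeSet, (rel (finalGraph S) e v : ℝ)) =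
      ∑ e ∈ (finalGraph S).edgeSet.toFinite.toFinset, (rel (finalGraph S) e v : ℝ) := by
    conv_lhs => rw [← Set.Finite.coe_toFinset ((finalGraph S).edgeSet.toFinite)]
    exact finsum_mem_coe_finset _ _
  rw [h1, h2]

lemma main [Fintype V] [DecidableEq V] (α : ℝ) (hα : 0 < α) (S : V → Finset V)
    (hconn : (finalGraph S).Connected)
    (hstable : ∀ (v : V) (S' : V → Finset V), (∀ z, z ≠ v → S' z = S z) →
      (finalGraph S').Connected → cost α S v ≤ cost α S' v)
    (a : V) (C : (finalGraph S).Walk a a) (hC : C.IsCycle)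
    (hshort : (C.length : ℝ) < α + 1 / 2)
    (u w : V) (hne : u ≠ w) (hbuy : w ∈ S u) (hemem : s(u, w) ∈ C.edges) : False := by
  classical
  set S' := Function.update S u (S u \ {w}) with hS'
  have hothers : ∀ z, z ≠ u → S' z = S z := fun z hz => Function.update_of_ne hz _ _
  have hSu' : S' u = S u \ {w} := Function.update_self _ _ _
  have hcard' : (S' u).card + 1 = (S u).card := by
    have h1 : ({w} : Finset V) ⊆ S u := Finset.singleton_subset_iff.mpr hbuy
    have h2 := Finset.card_pos.mpr ⟨w, hbuy⟩
    rw [hSu', Finset.card_sdiff_of_subset h1, Finset.card_singleton]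
    omega
  have hcc : ((S u).card : ℝ) = ((S' u).card : ℝ) + 1 := by exact_mod_cast hcard'.symm
  by_cases hrev : u ∈ S w
  · -- the mirror edge exists; dropping `w` does not change the graph
    have hEq : finalGraph S' = finalGraph S := finalGraph_update_eq hbuy hrev
    have hle := hstable u S' hothers (by rw [hEq]; exact hconn)
    rw [cost_eq, cost_eq, hEq] at hle
    have hmul : ((S u).card : ℝ) * α = ((S' u).card : ℝ) * α + α := by rw [hcc]; ring
    linarith
  · -- selling the edge deletes it from the graph
    have hEq : finalGraph S' = (finalGraph S).deleteEdges {s(u,w)} :=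
      finalGraph_update_del hbuy hrev hne
    have hre : ((finalGraph S) \ fromEdgeSet {s(u,w)}).Reachable u w :=
      (adj_and_reachable_delete_edges_iff_exists_cycle.mpr ⟨a, C, hC, hemem⟩).2
    have hre' : ((finalGraph S).deleteEdges {s(u,w)}).Reachable u w := hre
    have hpre : ∀ x y, (finalGraph S).Reachable x y →
        ((finalGraph S).deleteEdges {s(u,w)}).Reachable x y := fun x y h => reroute hre' h
    have hconn' : ((finalGraph S).deleteEdges {s(u,w)}).Connected := by
      rw [connected_iff]
      exact ⟨fun x y => hpre x y (hconn.preconnected x y), hconn.nonempty⟩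
    have hle := hstable u S' hothers (by rw [hEq]; exact hconn')
    rw [cost_eq, cost_eq, hEq] at hle
    -- edge sets
    have heE : s(u,w) ∈ (finalGraph S).edgeSet.toFinite.toFinset := by
      rw [Set.Finite.mem_toFinset]; exact C.edges_subset_edgeSet hemem
    have hEF' : ((finalGraph S).deleteEdges {s(u,w)}).edgeSet.toFinite.toFinset =
        (finalGraph S).edgeSet.toFinite.toFinset.erase s(u,w) := by
      ext f
      rw [Set.Finite.mem_toFinset, edgeSet_deleteEdges, Finset.mem_erase,
        Set.Finite.mem_toFinset]
      simp [and_comm]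
    have hm1 : 1 ≤ (finalGraph S).edgeSet.toFinite.toFinset.card :=
      Finset.card_pos.mpr ⟨_, heE⟩
    -- cardinality facts
    have hℓ3 : 3 ≤ C.length := hC.three_le_length
    have hℓn : C.length ≤ Fintype.card V := by
      have hnd := hC.support_nodup
      have h1 : C.support.tail.length = C.length := by
        rw [List.length_tail, Walk.length_support]
        omega
      calc C.length = C.support.tail.toFinset.card := by
            rw [List.toFinset_card_of_nodup hnd, h1]
        _ ≤ Fintype.card V := (Finset.card_le_univ _).trans (le_of_eq Finset.card_univ)
    have hn3 : 3 ≤ Fintype.card V := le_trans hℓ3 hℓn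
    have hnm : Fintype.card V ≤ (finalGraph S).edgeSet.toFinite.toFinset.card := by
      have h := card_edge_ge _ hconn'
      rw [hEF', Finset.card_erase_of_mem heE] at h
      omega
    have hm3 : 3 ≤ (finalGraph S).edgeSet.toFinite.toFinset.card := le_trans hn3 hnm
    -- rewrite the deleted-graph sum and denominator in hle
    rw [hEF', Finset.card_erase_of_mem heE] at hle
    -- abbreviations
    set EF := (finalGraph S).edgeSet.toFinite.toFinset with hEF
    set n := Fintype.card V with hn
    set M : ℝ := ((EF.card : ℕ) : ℝ) with hM
    have hMn : (n : ℝ) ≤ M := by rw [hM]; exact_mod_cast hnm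
    have hM3 : (3 : ℝ) ≤ M := by rw [hM]; exact_mod_cast hm3
    have hn3' : (3 : ℝ) ≤ (n : ℝ) := by exact_mod_cast hn3
    have hden : ((EF.card - 1 : ℕ) : ℝ) = M - 1 := by
      rw [Nat.cast_sub hm1, hM]
      norm_num
    rw [hden] at hle
    -- sums
    set Rsum : ℝ := ∑ f ∈ EF, (rel (finalGraph S) f u : ℝ) with hRsum
    set A : ℝ := ∑ f ∈ EF.erase s(u,w), (rel (finalGraph S) f u : ℝ) with hA
    set R' : ℝ := ∑ f ∈ EF.erase s(u,w),
      (rel ((finalGraph S).deleteEdges {s(u,w)}) f u : ℝ) with hR'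
    have hA_nonneg : 0 ≤ A := Finset.sum_nonneg fun f _ => Nat.cast_nonneg _
    have hA_le : A ≤ Rsum :=
      Finset.sum_le_sum_of_subset_of_nonneg (Finset.erase_subset _ _)
        (fun f _ _ => Nat.cast_nonneg _)
    have hRsum_le : Rsum ≤ (n : ℝ) * ((n : ℝ) - 1) / 2 := by
      have h := rel_sum_le (finalGraph S) hconn u
      have hn1 : 1 ≤ n := by omega
      have hcast : (2 : ℝ) * Rsum ≤ (n : ℝ) * ((n : ℝ) - 1) := by
        calc (2 : ℝ) * Rsum = ((2 * ∑ e ∈ EF, rel (finalGraph S) e u : ℕ) : ℝ) := by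
              push_cast [hRsum]; ring
          _ ≤ ((n * (n - 1) : ℕ) : ℝ) := by exact_mod_cast h
          _ = (n : ℝ) * ((n : ℝ) - 1) := by rw [Nat.cast_mul, Nat.cast_sub hn1]; norm_num
      linarith
    -- the delta bound
    have hdelta : R' - A ≤ ((C.length : ℝ) - 1) * ((n : ℝ) - 1) := by
      have hsplit : R' - A = ∑ f ∈ EF.erase s(u,w),
          ((rel ((finalGraph S).deleteEdges {s(u,w)}) f u : ℝ) -
            (rel (finalGraph S) f u : ℝ)) := by
        rw [Finset.sum_sub_distrib]
      set D := (EF.erase s(u,w)).filter (fun f => f ∈ C.edges) with hD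
      have hzero : ∀ f ∈ EF.erase s(u,w), f ∉ D →
          (rel ((finalGraph S).deleteEdges {s(u,w)}) f u : ℝ) -
            (rel (finalGraph S) f u : ℝ) = 0 := by
        intro f hf hfD
        have hfC : f ∉ C.edges := by
          intro hmem
          exact hfD (Finset.mem_filter.mpr ⟨hf, hmem⟩)
        rw [rel_deleteEdges_eq C hC hemem hfC u, sub_self]
      have hsum_eq : ∑ f ∈ EF.erase s(u,w),
          ((rel ((finalGraph S).deleteEdges {s(u,w)}) f u : ℝ) -
            (rel (finalGraph S) f u : ℝ)) =
          ∑ f ∈ D, ((rel ((finalGraph S).deleteEdges {s(u,w)}) f u : ℝ) -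
            (rel (finalGraph S) f u : ℝ)) :=
        (Finset.sum_subset (Finset.filter_subset _ _) hzero).symm
      have hterm : ∀ f ∈ D,
          (rel ((finalGraph S).deleteEdges {s(u,w)}) f u : ℝ) -
            (rel (finalGraph S) f u : ℝ) ≤ (n : ℝ) - 1 := by
        intro f _
        have h1 : rel ((finalGraph S).deleteEdges {s(u,w)}) f u ≤ n - 1 := rel_le _ f u
        have hn1 : 1 ≤ n := by omega
        have h1' : (rel ((finalGraph S).deleteEdges {s(u,w)}) f u : ℝ) ≤ (n : ℝ) - 1 := by
          calc (rel ((finalGraph S).deleteEdges {s(u,w)}) f u : ℝ)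
              ≤ ((n - 1 : ℕ) : ℝ) := by exact_mod_cast h1
            _ = (n : ℝ) - 1 := by rw [Nat.cast_sub hn1]; norm_num
        have h2 : (0 : ℝ) ≤ (rel (finalGraph S) f u : ℝ) := Nat.cast_nonneg _
        linarith
      have hDcard : D.card ≤ C.length - 1 := by
        have hsubD : D ⊆ C.edges.toFinset.erase s(u,w) := by
          intro f hf
          rw [hD, Finset.mem_filter, Finset.mem_erase] at hf
          rw [Finset.mem_erase, List.mem_toFinset]
          exact ⟨hf.1.1, hf.2⟩
        have h := Finset.card_le_card hsubD
        rw [Finset.card_erase_of_mem (List.mem_toFinset.mpr hemem),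
          List.toFinset_card_of_nodup hC.isCircuit.isTrail.edges_nodup,
          Walk.length_edges] at h
        exact h
      have hsum_le := Finset.sum_le_card_nsmul D
        (fun f => (rel ((finalGraph S).deleteEdges {s(u,w)}) f u : ℝ) -
          (rel (finalGraph S) f u : ℝ)) ((n : ℝ) - 1) hterm
      rw [nsmul_eq_mul] at hsum_le
      have hDcast : (D.card : ℝ) ≤ (C.length : ℝ) - 1 := by
        calc (D.card : ℝ) ≤ ((C.length - 1 : ℕ) : ℝ) := by exact_mod_cast hDcard
          _ = (C.length : ℝ) - 1 := by
              have h9 : 1 ≤ C.length := by omega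
              rw [Nat.cast_sub h9]; norm_num
      have hmul2 : (D.card : ℝ) * ((n : ℝ) - 1) ≤ ((C.length : ℝ) - 1) * ((n : ℝ) - 1) := by
        apply mul_le_mul_of_nonneg_right hDcast
        linarith
      rw [hsplit, hsum_eq]
      linarith
    -- main numeric derivation
    have hmul : ((S u).card : ℝ) * α = ((S' u).card : ℝ) * α + α := by rw [hcc]; ring
    have halpha : α ≤ R' / (M - 1) - Rsum / M := by linarith
    have hM1pos : (0 : ℝ) < M - 1 := by linarith
    have hMpos : (0 : ℝ) < M := by linarith
    have e1 : R' / (M - 1) = A / (M - 1) + (R' - A) / (M - 1) := by field_simp; ring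
    have e2 : A / (M - 1) - A / M = A / ((M - 1) * M) := by
      rw [div_sub_div _ _ (ne_of_gt hM1pos) (ne_of_gt hMpos)]
      congr 1
      ring
    have b1 : (R' - A) / (M - 1) ≤ (C.length : ℝ) - 1 := by
      rw [div_le_iff₀ hM1pos]
      calc R' - A ≤ ((C.length : ℝ) - 1) * ((n : ℝ) - 1) := hdelta
        _ ≤ ((C.length : ℝ) - 1) * (M - 1) := by
            apply mul_le_mul_of_nonneg_left (by linarith)
            have h8 : (3 : ℝ) ≤ (C.length : ℝ) := by exact_mod_cast hℓ3
            linarith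
    have b2 : A / ((M - 1) * M) ≤ 1 / 2 := by
      rw [div_le_iff₀ (mul_pos hM1pos hMpos)]
      have hmm : (n : ℝ) * ((n : ℝ) - 1) ≤ M * (M - 1) := by
        apply mul_le_mul hMn (by linarith) (by linarith) (by linarith)
      linarith
    have b3 : A / M ≤ Rsum / M := by
      apply div_le_div_of_nonneg_right hA_le hMpos.le
    have hfin : α ≤ (C.length : ℝ) - 1 / 2 := by linarith
    linarith

end Aux

/-- In the simple-minded adversary model with unilateral link formation, no Nash
equilibrium graph contains a cycle of length `ℓ < α + 1/2`. -/
theorem stmt_19 {V : Type*} [Fintype V] [DecidableEq V] (α : ℝ) (hα : 0 < α)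
    (S : V → Finset V) (hNE : IsNE α S) (a : V)
    (C : (finalGraph S).Walk a a) (hC : C.IsCycle)
    (hshort : (C.length : ℝ) < α + 1 / 2) : False := by
  obtain ⟨hconn, hstable⟩ := hNE
  have hℓ3 : 3 ≤ C.length := hC.three_le_length
  have hCnil : ¬C.Nil := by rw [SimpleGraph.Walk.nil_iff_length_eq]; omega
  have hadj : (finalGraph S).Adj a (C.getVert 1) := C.adj_snd hCnil
  have hemem : s(a, C.getVert 1) ∈ C.edges := Aux.first_edge_mem C hCnil
  obtain ⟨hne, hb⟩ := (Aux.finalGraph_adj).mp hadj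
  rcases hb with hb | hb
  · exact Aux.main α hα S hconn hstable a C hC hshort a (C.getVert 1) hne hb hemem
  · exact Aux.main α hα S hconn hstable a C hC hshort (C.getVert 1) a hne.symm hb
      (by rw [Sym2.eq_swap]; exact hemem)
end
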